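/- arXiv:1712.01540 — 8 statements merged into one kernel-verified Lean document; each statement's English description precedes it below -/
import Mathlib

section
/- Let X be a Banach space, S a closed subset of X, and x₀ ∈ S. If D is a sequence uniform tangent set to S at x₀ (for each ε > 0 there exists δ > 0 such that for each v ∈ D and each x ∈ S ∩ (x₀ + δ·closedBall), there is a sequence of positive reals tₘ → 0 with S ∩ (x + tₘ(v + ε·closedBall)) nonempty for all m), then D is a uniform tangent set to S at x₀ in the strong sense: for each ε > 0 there exist δ > 0 and λ > 0 such that for each v ∈ D and each x ∈ S ∩ (x₀ + δ·closedBall), the set S ∩ (x + t(v + ε·closedBall)) is nonempty for every t ∈ [0, λ]. -/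
open Metric Filter

section Aux

variable {X : Type*} [NormedAddCommGroup X] [NormedSpace ℝ X]

/-- Invariant of the construction: point in `S`, parameter in `[0,t]`, deviation bound. -/
def UtsGood (S : Set X) (v x : X) (ε t : ℝ) (p : X × ℝ) : Prop :=
  p.1 ∈ S ∧ 0 ≤ p.2 ∧ p.2 ≤ t ∧ ‖p.1 - x - p.2 • v‖ ≤ ε / 2 * p.2

/-- `τ` is an admissible increment at the state `p`. -/
def UtsAdm (S : Set X) (v : X) (ε t : ℝ) (p : X × ℝ) (τ : ℝ) : Prop :=
  0 < τ ∧ τ ≤ t - p.2 ∧ ∃ b : X, ‖b‖ ≤ 1 ∧ p.1 + τ • (v + (ε / 2) • b) ∈ S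

/-- Step relation: good successor, half-maximal increment. -/
def UtsStep (S : Set X) (v x : X) (ε t : ℝ) (p q : X × ℝ) : Prop :=
  UtsGood S v x ε t q ∧ p.2 ≤ q.2 ∧
    ‖q.1 - p.1 - (q.2 - p.2) • v‖ ≤ ε / 2 * (q.2 - p.2) ∧
    ∀ τ, UtsAdm S v ε t p τ → τ ≤ 2 * (q.2 - p.2)

lemma uts_step_exists (S : Set X) (v x : X) (ε t : ℝ) (hε : 0 < ε)
    (hyp : ∀ y s, y ∈ S → 0 ≤ s → s ≤ t → ‖y - x - s • v‖ ≤ ε / 2 * s → s < t →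
      ∃ τ b, 0 < τ ∧ τ ≤ t - s ∧ ‖b‖ ≤ 1 ∧ y + τ • (v + (ε / 4) • b) ∈ S)
    (p : X × ℝ) (hp : UtsGood S v x ε t p) : ∃ q, UtsStep S v x ε t p q := by
  obtain ⟨hpS, hp0, hpt, hpinv⟩ := hp
  rcases eq_or_lt_of_le hpt with heq | hlt
  · refine ⟨p, ⟨hpS, hp0, hpt, hpinv⟩, le_refl _, ?_, ?_⟩
    · simp
    · intro τ hτ
      have h1 := hτ.2.1
      rw [heq] at h1
      linarith [hτ.1]
  · -- the set of admissible increments is nonempty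
    set Sig : Set ℝ := {τ | UtsAdm S v ε t p τ} with hSig
    have hne : Sig.Nonempty := by
      obtain ⟨τ, b, hτpos, hτle, hb, hmem⟩ := hyp p.1 p.2 hpS hp0 hpt hpinv hlt
      refine ⟨τ, hτpos, hτle, (2:ℝ)⁻¹ • b, ?_, ?_⟩
      · rw [norm_smul]
        simp only [norm_inv, Real.norm_ofNat]
        nlinarith [norm_nonneg b]
      · have h24 : (ε / 2) • ((2:ℝ)⁻¹ • b) = (ε / 4) • b := by
          rw [smul_smul]
          congr 1
          ring
        rw [h24]; exact hmem
    obtain ⟨τ₁, hτ₁⟩ := hne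
    have hτ₁' : UtsAdm S v ε t p τ₁ := hτ₁
    have hbdd : BddAbove Sig := ⟨t - p.2, fun τ hτ => hτ.2.1⟩
    have hσpos : 0 < sSup Sig := lt_of_lt_of_le hτ₁'.1 (le_csSup hbdd hτ₁)
    obtain ⟨τ₀, hτ₀mem, hτ₀gt⟩ := exists_lt_of_lt_csSup ⟨τ₁, hτ₁⟩ (half_lt_self hσpos)
    obtain ⟨hτ₀pos, hτ₀le, b, hb, hmem⟩ := hτ₀mem
    refine ⟨(p.1 + τ₀ • (v + (ε / 2) • b), p.2 + τ₀), ⟨hmem, by linarith, by linarith, ?_⟩,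
      by linarith, ?_, ?_⟩
    · have heq : p.1 + τ₀ • (v + (ε / 2) • b) - x - (p.2 + τ₀) • v
          = (p.1 - x - p.2 • v) + (τ₀ * (ε / 2)) • b := by
        rw [smul_add, add_smul, smul_smul]; abel
      rw [heq]
      calc ‖(p.1 - x - p.2 • v) + (τ₀ * (ε / 2)) • b‖
          ≤ ‖p.1 - x - p.2 • v‖ + ‖(τ₀ * (ε / 2)) • b‖ := norm_add_le _ _
        _ ≤ ε / 2 * p.2 + τ₀ * (ε / 2) * 1 := by
            rw [norm_smul, Real.norm_eq_abs, abs_of_nonneg (by positivity)]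
            have h1 : τ₀ * (ε / 2) * ‖b‖ ≤ τ₀ * (ε / 2) * 1 :=
              mul_le_mul_of_nonneg_left hb (by positivity)
            linarith
        _ = ε / 2 * (p.2 + τ₀) := by ring
    · have heq : p.1 + τ₀ • (v + (ε / 2) • b) - p.1 - (p.2 + τ₀ - p.2) • v
          = (τ₀ * (ε / 2)) • b := by
        rw [smul_add, smul_smul]
        have h2 : p.2 + τ₀ - p.2 = τ₀ := by ring
        rw [h2]; abel
      rw [heq, norm_smul, Real.norm_eq_abs, abs_of_nonneg (by positivity)]
      have h1 : τ₀ * (ε / 2) * ‖b‖ ≤ τ₀ * (ε / 2) * 1 :=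
        mul_le_mul_of_nonneg_left hb (by positivity)
      have h2 : p.2 + τ₀ - p.2 = τ₀ := by ring
      rw [h2]; linarith
    · intro τ hτ
      have hle : τ ≤ sSup Sig := le_csSup hbdd hτ
      have h2 : p.2 + τ₀ - p.2 = τ₀ := by ring
      rw [h2]; linarith

lemma uts_key {X : Type*} [NormedAddCommGroup X] [NormedSpace ℝ X] [CompleteSpace X]
    (S : Set X) (hS : IsClosed S) (v x : X) (ε t : ℝ) (hε : 0 < ε) (htpos : 0 < t)
    (hx : x ∈ S)
    (hyp : ∀ y s, y ∈ S → 0 ≤ s → s ≤ t → ‖y - x - s • v‖ ≤ ε / 2 * s → s < t →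
      ∃ τ b, 0 < τ ∧ τ ≤ t - s ∧ ‖b‖ ≤ 1 ∧ y + τ • (v + (ε / 4) • b) ∈ S) :
    ∃ b : X, ‖b‖ ≤ 1 ∧ x + t • (v + ε • b) ∈ S := by
  have hex : ∀ p : X × ℝ, ∃ q, UtsGood S v x ε t p → UtsStep S v x ε t p q := by
    intro p
    by_cases hp : UtsGood S v x ε t p
    · obtain ⟨q, hq⟩ := uts_step_exists S v x ε t hε hyp p hp
      exact ⟨q, fun _ => hq⟩
    · exact ⟨p, fun hp' => absurd hp' hp⟩
  choose g hg using hex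
  set f : ℕ → X × ℝ := fun n => g^[n] (x, 0) with hf
  have hfs : ∀ n, f (n + 1) = g (f n) := fun n => Function.iterate_succ_apply' g n _
  have hGood : ∀ n, UtsGood S v x ε t (f n) := by
    intro n
    induction n with
    | zero =>
        have hf0 : f 0 = (x, 0) := rfl
        rw [hf0]
        exact ⟨hx, le_refl 0, htpos.le, by simp⟩
    | succ n ih =>
        rw [hfs]
        exact (hg _ ih).1
  have hStep : ∀ n, UtsStep S v x ε t (f n) (f (n + 1)) := fun n => by
    rw [hfs]; exact hg _ (hGood n)
  set sseq : ℕ → ℝ := fun n => (f n).2 with hsseq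
  set yseq : ℕ → X := fun n => (f n).1 with hyseq
  have hmono : Monotone sseq := monotone_nat_of_le_succ fun n => (hStep n).2.1
  have hub : ∀ n, sseq n ≤ t := fun n => (hGood n).2.2.1
  have hbdd : BddAbove (Set.range sseq) := ⟨t, by rintro _ ⟨n, rfl⟩; exact hub n⟩
  set sinf := ⨆ n, sseq n with hsinf
  have hs_tendsto : Tendsto sseq atTop (nhds sinf) := tendsto_atTop_ciSup hmono hbdd
  have hsle : ∀ n, sseq n ≤ sinf := fun n => le_ciSup hbdd n
  have hsinfle : sinf ≤ t := ciSup_le hub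
  have hsinf0 : 0 ≤ sinf := le_trans (hGood 0).2.1 (hsle 0)
  set K := ‖v‖ + ε / 2 with hK
  have hKnn : 0 ≤ K := by positivity
  have hdy : ∀ n, ‖yseq (n + 1) - yseq n‖ ≤ (sseq (n + 1) - sseq n) * K := by
    intro n
    have h1 := (hStep n).2.2.1
    have h2 := (hStep n).2.1
    have h3 : ‖yseq (n+1) - yseq n‖
        ≤ ‖yseq (n+1) - yseq n - (sseq (n+1) - sseq n) • v‖ + ‖(sseq (n+1) - sseq n) • v‖ := by
      have := norm_add_le (yseq (n+1) - yseq n - (sseq (n+1) - sseq n) • v)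
        ((sseq (n+1) - sseq n) • v)
      simpa using this
    have h4 : ‖(sseq (n+1) - sseq n) • v‖ = (sseq (n+1) - sseq n) * ‖v‖ := by
      rw [norm_smul, Real.norm_eq_abs, abs_of_nonneg (by linarith)]
    rw [hK]
    nlinarith [h1, h3, h4]
  have hdym : ∀ n m, n ≤ m → ‖yseq m - yseq n‖ ≤ (sseq m - sseq n) * K := by
    intro n m hnm
    induction m, hnm using Nat.le_induction with
    | base => simp
    | succ m hnm ih =>
        calc ‖yseq (m+1) - yseq n‖
            ≤ ‖yseq (m+1) - yseq m‖ + ‖yseq m - yseq n‖ := by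
              have := norm_add_le (yseq (m+1) - yseq m) (yseq m - yseq n)
              simpa using this
          _ ≤ (sseq (m+1) - sseq m) * K + (sseq m - sseq n) * K := add_le_add (hdy m) ih
          _ = (sseq (m+1) - sseq n) * K := by ring
  have hcauchy : CauchySeq yseq := by
    apply cauchySeq_of_le_tendsto_0 (fun N => (sinf - sseq N) * K)
    · intro n m N hn hm
      have key : ∀ a b : ℕ, N ≤ a → a ≤ b → dist (yseq a) (yseq b) ≤ (sinf - sseq N) * K := by
        intro a b hNa hab
        rw [dist_eq_norm']
        calc ‖yseq b - yseq a‖ ≤ (sseq b - sseq a) * K := hdym a b hab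
          _ ≤ (sinf - sseq N) * K := by
              apply mul_le_mul_of_nonneg_right _ hKnn
              have := hsle b
              have := hmono hNa
              linarith
      rcases le_total n m with hnm | hmn
      · exact key n m hn hnm
      · rw [dist_comm]; exact key m n hm hmn
    · have : Tendsto (fun N => (sinf - sseq N) * K) atTop (nhds ((sinf - sinf) * K)) :=
        ((tendsto_const_nhds.sub hs_tendsto).mul_const K)
      simpa using this
  obtain ⟨yinf, hyinf⟩ := cauchySeq_tendsto_of_complete hcauchy
  have hyinfS : yinf ∈ S := hS.mem_of_tendsto hyinf (Eventually.of_forall fun n => (hGood n).1)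
  have hinvinf : ‖yinf - x - sinf • v‖ ≤ ε / 2 * sinf := by
    have hf1 : Tendsto (fun n => ‖yseq n - x - sseq n • v‖) atTop
        (nhds ‖yinf - x - sinf • v‖) :=
      (((hyinf.sub tendsto_const_nhds).sub (hs_tendsto.smul_const v))).norm
    have hf2 : Tendsto (fun n => ε / 2 * sseq n) atTop (nhds (ε / 2 * sinf)) :=
      hs_tendsto.const_mul _
    exact le_of_tendsto_of_tendsto' hf1 hf2 fun n => (hGood n).2.2.2
  have hseqt : sinf = t := by
    by_contra hne
    have hlt : sinf < t := lt_of_le_of_ne hsinfle hne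
    obtain ⟨τ, b, hτpos, hτle, hbnorm, hmem⟩ :=
      hyp yinf sinf hyinfS hsinf0 hsinfle hinvinf hlt
    have hΔ : Tendsto (fun n => sseq (n + 1) - sseq n) atTop (nhds 0) := by
      have h1 : Tendsto (fun n => sseq (n + 1)) atTop (nhds sinf) :=
        hs_tendsto.comp (tendsto_add_atTop_nat 1)
      have := h1.sub hs_tendsto
      simpa using this
    have h1 : ∀ᶠ n in atTop, 2 * (sseq (n + 1) - sseq n) < τ := by
      have : ∀ᶠ n in atTop, sseq (n + 1) - sseq n < τ / 2 :=
        hΔ.eventually_lt_const (by linarith)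
      filter_upwards [this] with n hn
      linarith
    have h2 : ∀ᶠ n in atTop, ‖yseq n - yinf‖ < ε / 4 * τ := by
      have hnt : Tendsto (fun n => ‖yseq n - yinf‖) atTop (nhds 0) := by
        have := (hyinf.sub (tendsto_const_nhds (x := yinf))).norm
        simpa using this
      exact hnt.eventually_lt_const (by positivity)
    obtain ⟨n, hn1, hn2⟩ := (h1.and h2).exists
    have hAdm : UtsAdm S v ε t (f n) τ := by
      refine ⟨hτpos, ?_, ?_⟩
      · have := hsle n
        show τ ≤ t - sseq n
        linarith
      · refine ⟨(ε / 2)⁻¹ • ((ε / 4) • b + τ⁻¹ • (yinf - yseq n)), ?_, ?_⟩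
        · rw [norm_smul, Real.norm_eq_abs, abs_of_nonneg (by positivity)]
          have hb1 : ‖(ε / 4) • b + τ⁻¹ • (yinf - yseq n)‖
              ≤ ε / 4 * ‖b‖ + τ⁻¹ * ‖yinf - yseq n‖ := by
            calc ‖(ε / 4) • b + τ⁻¹ • (yinf - yseq n)‖
                ≤ ‖(ε / 4) • b‖ + ‖τ⁻¹ • (yinf - yseq n)‖ := norm_add_le _ _
              _ = ε / 4 * ‖b‖ + τ⁻¹ * ‖yinf - yseq n‖ := by
                  rw [norm_smul, norm_smul, Real.norm_eq_abs, Real.norm_eq_abs,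
                    abs_of_nonneg (by positivity : (0:ℝ) ≤ ε / 4),
                    abs_of_nonneg (by positivity : (0:ℝ) ≤ τ⁻¹)]
          have hb2 : ‖yinf - yseq n‖ = ‖yseq n - yinf‖ := norm_sub_rev _ _
          have hb3 : τ⁻¹ * ‖yinf - yseq n‖ ≤ ε / 4 := by
            rw [hb2, inv_mul_le_iff₀ hτpos]
            nlinarith
          have hb4 : ε / 4 * ‖b‖ ≤ ε / 4 := by nlinarith [norm_nonneg b]
          have hmul : (ε / 2)⁻¹ * ‖(ε / 4) • b + τ⁻¹ • (yinf - yseq n)‖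
              ≤ (ε / 2)⁻¹ * (ε / 2) := by
            apply mul_le_mul_of_nonneg_left _ (by positivity)
            linarith
          rw [inv_mul_cancel₀ (by positivity : (ε / 2) ≠ 0)] at hmul
          exact hmul
        · have hrw : (ε / 2) • ((ε / 2)⁻¹ • ((ε / 4) • b + τ⁻¹ • (yinf - yseq n)))
              = (ε / 4) • b + τ⁻¹ • (yinf - yseq n) :=
            smul_inv_smul₀ (by positivity : (ε / 2) ≠ 0) _
          show yseq n + τ • (v + (ε / 2) • ((ε / 2)⁻¹ • ((ε / 4) • b + τ⁻¹ • (yinf - yseq n)))) ∈ S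
          rw [hrw]
          have heq : yseq n + τ • (v + ((ε / 4) • b + τ⁻¹ • (yinf - yseq n)))
              = yinf + τ • (v + (ε / 4) • b) := by
            rw [smul_add, smul_add, smul_add, smul_inv_smul₀ hτpos.ne']
            abel
          rw [heq]
          exact hmem
    have := (hStep n).2.2.2 τ hAdm
    linarith
  refine ⟨(ε * t)⁻¹ • (yinf - x - t • v), ?_, ?_⟩
  · rw [norm_smul, Real.norm_eq_abs, abs_of_nonneg (by positivity)]
    have h1 : ‖yinf - x - t • v‖ ≤ ε / 2 * t := by rw [← hseqt]; exact hinvinf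
    have h2 : (ε * t)⁻¹ * ‖yinf - x - t • v‖ ≤ (ε * t)⁻¹ * (ε / 2 * t) :=
      mul_le_mul_of_nonneg_left h1 (by positivity)
    have h3 : (ε * t)⁻¹ * (ε / 2 * t) = 1 / 2 := by
      field_simp
    linarith
  · have heq : x + t • (v + ε • ((ε * t)⁻¹ • (yinf - x - t • v))) = yinf := by
      rw [smul_add, smul_smul, smul_smul]
      have hc : t * ε * (ε * t)⁻¹ = 1 := by
        field_simp
      rw [hc, one_smul]
      abel
    rw [heq]
    exact hyinfS

end Aux

/-- If `D` is a sequence uniform tangent set to `S` at `x₀`, then `D` is a uniform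
tangent set in the strong (λ-uniform) sense. -/
theorem sequence_uts_implies_strong_uts
    {X : Type*} [NormedAddCommGroup X] [NormedSpace ℝ X] [CompleteSpace X]
    (S : Set X) (hS : IsClosed S) (x₀ : X) (hx₀ : x₀ ∈ S)
    (D : Set X) (hD : Bornology.IsBounded D)
    (h : ∀ ε > (0:ℝ), ∃ δ > (0:ℝ), ∀ v ∈ D, ∀ x ∈ S, ‖x - x₀‖ ≤ δ →
      ∃ t : ℕ → ℝ, (∀ m, 0 < t m) ∧ Tendsto t atTop (nhds 0) ∧
        ∀ m, ∃ b : X, ‖b‖ ≤ 1 ∧ x + t m • (v + ε • b) ∈ S) :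
    ∀ ε > (0:ℝ), ∃ δ > (0:ℝ), ∃ lam > (0:ℝ), ∀ v ∈ D, ∀ x ∈ S, ‖x - x₀‖ ≤ δ →
      ∀ t ∈ Set.Icc (0:ℝ) lam, ∃ b : X, ‖b‖ ≤ 1 ∧ x + t • (v + ε • b) ∈ S := by
  intro ε hε
  obtain ⟨δ', hδ'pos, hh⟩ := h (ε / 4) (by linarith)
  obtain ⟨M₀, hM₀⟩ := hD.exists_norm_le
  set M := max M₀ 0 with hMdef
  have hM : ∀ w ∈ D, ‖w‖ ≤ M := fun w hw => le_trans (hM₀ w hw) (le_max_left _ _)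
  have hMnn : (0:ℝ) ≤ M := le_max_right _ _
  have hden : (0:ℝ) < M + ε + 1 := by linarith
  refine ⟨δ' / 2, by linarith, δ' / (2 * (M + ε + 1)), by positivity, ?_⟩
  intro v hv x hx hxδ t ht
  obtain ⟨ht0, htlam⟩ := ht
  rcases ht0.eq_or_lt with rfl | htpos
  · exact ⟨0, by simp, by simpa using hx⟩
  have htb : t * (M + ε + 1) ≤ δ' / 2 := by
    have h1 : t * (2 * (M + ε + 1)) ≤ δ' := (le_div_iff₀ (by positivity)).mp htlam
    nlinarith
  have hyp : ∀ y s, y ∈ S → 0 ≤ s → s ≤ t → ‖y - x - s • v‖ ≤ ε / 2 * s → s < t →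
      ∃ τ b, 0 < τ ∧ τ ≤ t - s ∧ ‖b‖ ≤ 1 ∧ y + τ • (v + (ε / 4) • b) ∈ S := by
    intro y s hyS hs0 hst hinv hslt
    have hyx₀ : ‖y - x₀‖ ≤ δ' := by
      have h1 : ‖y - x₀‖ ≤ ‖y - x - s • v‖ + ‖s • v‖ + ‖x - x₀‖ := by
        calc ‖y - x₀‖ = ‖(y - x - s • v) + s • v + (x - x₀)‖ := by congr 1; abel
          _ ≤ ‖y - x - s • v‖ + ‖s • v‖ + ‖x - x₀‖ := norm_add₃_le
      have h2 : ‖s • v‖ = s * ‖v‖ := by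
        rw [norm_smul, Real.norm_eq_abs, abs_of_nonneg hs0]
      have h3 : s * ‖v‖ ≤ t * M :=
        mul_le_mul hst (hM v hv) (norm_nonneg v) ht0
      have h4 : ε / 2 * s ≤ ε / 2 * t :=
        mul_le_mul_of_nonneg_left hst (by positivity)
      nlinarith [htb]
    obtain ⟨ts, hpos, htd, hb⟩ := hh v hv y hyS hyx₀
    have hev : ∀ᶠ m in atTop, ts m < t - s := htd.eventually_lt_const (by linarith)
    obtain ⟨m, hm⟩ := hev.exists
    obtain ⟨b, hbn, hbm⟩ := hb m
    exact ⟨ts m, b, hpos m, hm.le, hbn, hbm⟩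
  exact uts_key S hS v x ε t hε htpos hx hyp
end

section
/- Let X be a Banach space, S a closed subset of X, x₀ ∈ S, and let D be a sequence uniform tangent set to S at x₀. Then the convex hull of D is again a sequence uniform tangent set to S at x₀. -/
open Metric Filter Finset

section Aux

variable {X : Type*} [NormedAddCommGroup X] [NormedSpace ℝ X]

/-- State predicate for the Zorn argument. -/
def UTSValid (S : Set X) (x : X) {ι : Type} (F : Finset ι) (w : ι → ℝ) (z : ι → X)
    (ε' η q : ℝ) (p : (ι → ℝ) × X) : Prop :=
  (∀ i ∈ F, 0 ≤ p.1 i) ∧ (∑ i ∈ F, p.1 i ≤ η) ∧ p.2 ∈ S ∧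
    ‖p.2 - x - ∑ i ∈ F, p.1 i • z i‖ ≤ ε' * ∑ i ∈ F, p.1 i ∧
    ∀ i ∈ F, ∀ j ∈ F, p.1 i / w i ≤ p.1 j / w j + q

/-- Extension relation for the Zorn argument. -/
def UTSRel {ι : Type} (F : Finset ι) (z : ι → X) (ε' : ℝ) (a b : (ι → ℝ) × X) : Prop :=
  (∀ i ∈ F, a.1 i ≤ b.1 i) ∧
    ‖b.2 - a.2 - ∑ i ∈ F, (b.1 i - a.1 i) • z i‖ ≤ ε' * (∑ i ∈ F, b.1 i - ∑ i ∈ F, a.1 i)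

lemma UTSRel.refl {ι : Type} (F : Finset ι) (z : ι → X) (ε' : ℝ) (a : (ι → ℝ) × X) :
    UTSRel F z ε' a a := by
  refine ⟨fun i _ => le_rfl, ?_⟩
  simp

lemma UTSRel.trans' {ι : Type} {F : Finset ι} {z : ι → X} {ε' : ℝ} {a b c : (ι → ℝ) × X}
    (hab : UTSRel F z ε' a b) (hbc : UTSRel F z ε' b c) : UTSRel F z ε' a c := by
  refine ⟨fun i hi => (hab.1 i hi).trans (hbc.1 i hi), ?_⟩
  have key : c.2 - a.2 - ∑ i ∈ F, (c.1 i - a.1 i) • z i =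
      (c.2 - b.2 - ∑ i ∈ F, (c.1 i - b.1 i) • z i) +
      (b.2 - a.2 - ∑ i ∈ F, (b.1 i - a.1 i) • z i) := by
    have : ∑ i ∈ F, (c.1 i - a.1 i) • z i =
        ∑ i ∈ F, (c.1 i - b.1 i) • z i + ∑ i ∈ F, (b.1 i - a.1 i) • z i := by
      rw [← Finset.sum_add_distrib]
      refine Finset.sum_congr rfl fun i _ => ?_
      rw [← add_smul, sub_add_sub_cancel]
    rw [this]; abel
  rw [key]
  calc ‖_ + _‖ ≤ _ + _ := norm_add_le _ _
    _ ≤ ε' * (∑ i ∈ F, c.1 i - ∑ i ∈ F, b.1 i) + ε' * (∑ i ∈ F, b.1 i - ∑ i ∈ F, a.1 i) :=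
        add_le_add hbc.2 hab.2
    _ = ε' * (∑ i ∈ F, c.1 i - ∑ i ∈ F, a.1 i) := by ring

lemma UTSRel.sum_le {ι : Type} {F : Finset ι} {z : ι → X} {ε' : ℝ} {a b : (ι → ℝ) × X}
    (hab : UTSRel F z ε' a b) : ∑ i ∈ F, a.1 i ≤ ∑ i ∈ F, b.1 i :=
  Finset.sum_le_sum hab.1

lemma UTSRel.coord_gap {ι : Type} {F : Finset ι} {z : ι → X} {ε' : ℝ} {a b : (ι → ℝ) × X}
    (hab : UTSRel F z ε' a b) {i : ι} (hi : i ∈ F) :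
    b.1 i - a.1 i ≤ ∑ j ∈ F, b.1 j - ∑ j ∈ F, a.1 j := by
  rw [← Finset.sum_sub_distrib]
  exact Finset.single_le_sum (f := fun j => b.1 j - a.1 j)
    (fun j hj => sub_nonneg.2 (hab.1 j hj)) hi

lemma UTSRel.snd_dist {ι : Type} {F : Finset ι} {z : ι → X} {ε' C : ℝ} {a b : (ι → ℝ) × X}
    (hab : UTSRel F z ε' a b) (hC : ∀ i ∈ F, ‖z i‖ ≤ C) :
    ‖b.2 - a.2‖ ≤ (C + ε') * (∑ i ∈ F, b.1 i - ∑ i ∈ F, a.1 i) := by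
  have h1 : ‖∑ i ∈ F, (b.1 i - a.1 i) • z i‖ ≤ C * (∑ i ∈ F, b.1 i - ∑ i ∈ F, a.1 i) := by
    calc ‖∑ i ∈ F, (b.1 i - a.1 i) • z i‖ ≤ ∑ i ∈ F, ‖(b.1 i - a.1 i) • z i‖ :=
          norm_sum_le _ _
      _ ≤ ∑ i ∈ F, (b.1 i - a.1 i) * C := by
          refine Finset.sum_le_sum fun i hi => ?_
          rw [norm_smul, Real.norm_eq_abs, abs_of_nonneg (sub_nonneg.2 (hab.1 i hi))]
          exact mul_le_mul_of_nonneg_left (hC i hi) (sub_nonneg.2 (hab.1 i hi))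
      _ = C * (∑ i ∈ F, b.1 i - ∑ i ∈ F, a.1 i) := by
          rw [← Finset.sum_mul, Finset.sum_sub_distrib]; ring
  calc ‖b.2 - a.2‖ = ‖(b.2 - a.2 - ∑ i ∈ F, (b.1 i - a.1 i) • z i) +
        ∑ i ∈ F, (b.1 i - a.1 i) • z i‖ := by rw [sub_add_cancel]
    _ ≤ _ + _ := norm_add_le _ _
    _ ≤ ε' * (∑ i ∈ F, b.1 i - ∑ i ∈ F, a.1 i) + C * (∑ i ∈ F, b.1 i - ∑ i ∈ F, a.1 i) :=
        add_le_add hab.2 h1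
    _ = (C + ε') * (∑ i ∈ F, b.1 i - ∑ i ∈ F, a.1 i) := by ring

lemma uts_chain_bound [CompleteSpace X]
    {S : Set X} (hS : IsClosed S) {x : X} {ι : Type} {F : Finset ι} {w : ι → ℝ} {z : ι → X}
    {ε' η q C : ℝ} (hε' : 0 < ε') (hC : 0 ≤ C) (hzC : ∀ i ∈ F, ‖z i‖ ≤ C)
    (p0 : {p : (ι → ℝ) × X // UTSValid S x F w z ε' η q p})
    (c : Set {p : (ι → ℝ) × X // UTSValid S x F w z ε' η q p})
    (hc : IsChain (fun a b => UTSRel F z ε' a.1 b.1) c) :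
    ∃ ub : {p : (ι → ℝ) × X // UTSValid S x F w z ε' η q p}, ∀ a ∈ c, UTSRel F z ε' a.1 ub.1 := by
  classical
  rcases c.eq_empty_or_nonempty with rfl | hne
  · exact ⟨p0, by simp⟩
  set T : {p : (ι → ℝ) × X // UTSValid S x F w z ε' η q p} → ℝ := fun a => ∑ i ∈ F, a.1.1 i with hT
  have hTη : ∀ a, T a ≤ η := fun a => a.2.2.1
  have hcoordT : ∀ a, ∀ i ∈ F, a.1.1 i ≤ T a := fun a i hi =>
    Finset.single_le_sum (fun j hj => a.2.1 j hj) hi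
  have hbddT : BddAbove (T '' c) := ⟨η, by rintro t ⟨a, _, rfl⟩; exact hTη a⟩
  set τ := sSup (T '' c) with hτ
  have hτη : τ ≤ η := csSup_le (hne.image T) (by rintro t ⟨a, _, rfl⟩; exact hTη a)
  have hTleτ : ∀ a ∈ c, T a ≤ τ := fun a ha => le_csSup hbddT ⟨a, ha, rfl⟩
  have hn1 : ∀ n : ℕ, (0:ℝ) < 1 / (n + 1) := fun n => by positivity
  have hexu : ∀ n : ℕ, ∃ a, a ∈ c ∧  τ - 1 / (n + 1) < T a := by
    intro n
    obtain ⟨t, ⟨a, ha, rfl⟩, hlt⟩ :=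
      exists_lt_of_lt_csSup (hne.image T) (by linarith [hn1 n] : τ - 1 / (n + 1) < τ)
    exact ⟨a, ha, hlt⟩
  choose u hu1 hu2 using hexu
  have hcomp : ∀ a ∈ c, ∀ b ∈ c, UTSRel F z ε' a.1 b.1 ∨ UTSRel F z ε' b.1 a.1 := by
    intro a ha b hb
    rcases eq_or_ne a b with rfl | hab
    · exact Or.inl (UTSRel.refl _ _ _ _)
    · exact hc ha hb hab
  have hτn : ∀ n : ℕ, τ - T (u n) ≤ 1 / (n + 1) := fun n => by linarith [hu2 n]
  have hstar : ∀ a ∈ c, ∀ n : ℕ, ∀ i ∈ F, a.1.1 i ≤ (u n).1.1 i + 1 / (n + 1) := by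
    intro a ha n i hi
    rcases hcomp a ha (u n) (hu1 n) with hab | hba
    · have := hab.1 i hi; linarith [hn1 n]
    · have h1 := hba.coord_gap hi
      have h2 := hTleτ a ha
      have h3 := hτn n
      change _ ≤ T a - T (u n) at h1
      linarith
  set sl : ι → ℝ := fun i => sSup ((fun a : {p : (ι → ℝ) × X // UTSValid S x F w z ε' η q p} => a.1.1 i) '' c) with hsl
  have hbdd_i : ∀ i ∈ F, BddAbove ((fun a : {p : (ι → ℝ) × X // UTSValid S x F w z ε' η q p} => a.1.1 i) '' c) := fun i hi =>
    ⟨η, by rintro t ⟨a, ha, rfl⟩; exact (hcoordT a i hi).trans (hTη a)⟩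
  have hle_sl : ∀ a ∈ c, ∀ i ∈ F, a.1.1 i ≤ sl i := fun a ha i hi =>
    le_csSup (hbdd_i i hi) ⟨a, ha, rfl⟩
  have hslle : ∀ (n : ℕ), ∀ i ∈ F, sl i ≤ (u n).1.1 i + 1 / (n + 1) := fun n i hi =>
    csSup_le (hne.image _) (by rintro t ⟨a, ha, rfl⟩; exact hstar a ha n i hi)
  have h1n : Tendsto (fun n : ℕ => 1 / ((n : ℝ) + 1)) atTop (nhds 0) :=
    tendsto_one_div_add_atTop_nhds_zero_nat
  have htends : ∀ i ∈ F, Tendsto (fun n => (u n).1.1 i) atTop (nhds (sl i)) := by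
    intro i hi
    have hlow : Tendsto (fun n : ℕ => sl i - 1 / ((n : ℝ) + 1)) atTop (nhds (sl i)) := by
      simpa using tendsto_const_nhds.sub h1n
    refine tendsto_of_tendsto_of_tendsto_of_le_of_le hlow tendsto_const_nhds
      (fun n => by linarith [hslle n i hi]) (fun n => hle_sl (u n) (hu1 n) i hi)
  have hτtend : Tendsto (fun n => T (u n)) atTop (nhds τ) := by
    have hlow : Tendsto (fun n : ℕ => τ - 1 / ((n : ℝ) + 1)) atTop (nhds τ) := by
      simpa using tendsto_const_nhds.sub h1n
    exact tendsto_of_tendsto_of_tendsto_of_le_of_le hlow tendsto_const_nhds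
      (fun n => by linarith [hu2 n]) (fun n => hTleτ (u n) (hu1 n))
  have hsuml : ∑ i ∈ F, sl i = τ :=
    tendsto_nhds_unique (tendsto_finset_sum F htends) hτtend
  have hyC : CauchySeq (fun n => (u n).1.2) := by
    apply cauchySeq_of_le_tendsto_0 (fun N : ℕ => (C + ε') * (1 / (N + 1)))
    · intro n m N hn hm
      have key : ∀ k l : ℕ, N ≤ k → UTSRel F z ε' (u k).1 (u l).1 →
          dist (u k).1.2 (u l).1.2 ≤ (C + ε') * (1 / (N + 1)) := by
        intro k l hk hrel
        have h1 := hrel.snd_dist hzC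
        have h2 : T (u l) - T (u k) ≤ 1 / (N + 1) := by
          have := hτn k
          have h3 : (1:ℝ) / (k + 1) ≤ 1 / (N + 1) := by
            apply one_div_le_one_div_of_le (by positivity)
            have : (N:ℝ) ≤ k := Nat.cast_le.mpr hk
            linarith
          linarith [hTleτ (u l) (hu1 l)]
        rw [dist_eq_norm, norm_sub_rev]
        change _ ≤ (C + ε') * (T (u l) - T (u k)) at h1
        calc ‖(u l).1.2 - (u k).1.2‖ ≤ (C + ε') * (T (u l) - T (u k)) := h1
          _ ≤ (C + ε') * (1 / (N + 1)) := by
              apply mul_le_mul_of_nonneg_left h2 (by positivity)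
      rcases hcomp (u n) (hu1 n) (u m) (hu1 m) with hrel | hrel
      · exact key n m hn hrel
      · rw [dist_comm]; exact key m n hm hrel
    · simpa using tendsto_const_nhds.mul h1n
  obtain ⟨yl, hyl⟩ := cauchySeq_tendsto_of_complete hyC
  have hsumtend : Tendsto (fun n => ∑ i ∈ F, (u n).1.1 i • z i) atTop
      (nhds (∑ i ∈ F, sl i • z i)) :=
    tendsto_finset_sum F fun i hi => (htends i hi).smul_const (z i)
  have hvalid : UTSValid S x F w z ε' η q (sl, yl) := by
    refine ⟨fun i hi => ?_, ?_, ?_, ?_, ?_⟩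
    · exact ((u 0).2.1 i hi).trans (hle_sl (u 0) (hu1 0) i hi)
    · rw [hsuml]; exact hτη
    · exact hS.mem_of_tendsto hyl (Eventually.of_forall fun n => (u n).2.2.2.1)
    · refine le_of_tendsto_of_tendsto'
        (f := fun n => ‖(u n).1.2 - x - ∑ i ∈ F, (u n).1.1 i • z i‖)
        (g := fun n => ε' * T (u n))
        (((hyl.sub tendsto_const_nhds).sub hsumtend).norm)
        (tendsto_const_nhds.mul hτtend) (fun n => (u n).2.2.2.2.1) |>.trans ?_
      rw [hsuml]
    · intro i hi j hj
      refine le_of_tendsto_of_tendsto'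
        (f := fun n => (u n).1.1 i / w i) (g := fun n => (u n).1.1 j / w j + q)
        ((htends i hi).div_const _)
        (((htends j hj).div_const _).add tendsto_const_nhds)
        (fun n => (u n).2.2.2.2.2 i hi j hj)
  refine ⟨⟨(sl, yl), hvalid⟩, fun a ha => ⟨fun i hi => hle_sl a ha i hi, ?_⟩⟩
  have hss : ∀ f g : ι → ℝ, ∑ i ∈ F, (f i - g i) • z i =
      ∑ i ∈ F, f i • z i - ∑ i ∈ F, g i • z i := by
    intro f g
    rw [← Finset.sum_sub_distrib]
    exact Finset.sum_congr rfl fun i _ => sub_smul _ _ _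
  have hTaτ : T a ≤ τ := hTleτ a ha
  have hbound : ∀ n : ℕ, ‖(u n).1.2 - a.1.2 - ∑ i ∈ F, ((u n).1.1 i - a.1.1 i) • z i‖ ≤
      ε' * (τ - T a) + ε' * (1 / (n + 1)) := by
    intro n
    have hεττ : 0 ≤ ε' * (τ - T a) := mul_nonneg hε'.le (by linarith)
    rcases hcomp a ha (u n) (hu1 n) with hab | hba
    · have h1 := hab.2
      change _ ≤ ε' * (T (u n) - T a) at h1
      have h2 : ε' * (T (u n) - T a) ≤ ε' * (τ - T a) :=
        mul_le_mul_of_nonneg_left (by linarith [hTleτ (u n) (hu1 n)]) hε'.le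
      have h3 : 0 ≤ ε' * (1 / ((n:ℝ) + 1)) := by positivity
      linarith
    · have h1 := hba.2
      change _ ≤ ε' * (T a - T (u n)) at h1
      have hneg : (u n).1.2 - a.1.2 - ∑ i ∈ F, ((u n).1.1 i - a.1.1 i) • z i =
          -(a.1.2 - (u n).1.2 - ∑ i ∈ F, (a.1.1 i - (u n).1.1 i) • z i) := by
        rw [hss, hss]; abel
      rw [hneg, norm_neg]
      have h2 : ε' * (T a - T (u n)) ≤ ε' * (1 / (n + 1)) :=
        mul_le_mul_of_nonneg_left (by linarith [hτn n]) hε'.le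
      linarith
  have hlhs : Tendsto (fun n => ‖(u n).1.2 - a.1.2 -
      ∑ i ∈ F, ((u n).1.1 i - a.1.1 i) • z i‖) atTop
      (nhds ‖yl - a.1.2 - ∑ i ∈ F, (sl i - a.1.1 i) • z i‖) := by
    refine (((hyl.sub tendsto_const_nhds).sub (tendsto_finset_sum F fun i hi => ?_)).norm)
    exact ((htends i hi).sub tendsto_const_nhds).smul_const (z i)
  have hrhs : Tendsto (fun n : ℕ => ε' * (τ - T a) + ε' * (1 / ((n:ℝ) + 1))) atTop
      (nhds (ε' * (τ - T a))) := by
    have : Tendsto (fun n : ℕ => ε' * (1 / ((n:ℝ) + 1))) atTop (nhds (ε' * 0)) :=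
      tendsto_const_nhds.mul h1n
    simpa using tendsto_const_nhds.add this
  have := le_of_tendsto_of_tendsto' hlhs hrhs hbound
  calc ‖yl - a.1.2 - ∑ i ∈ F, (sl i - a.1.1 i) • z i‖ ≤ ε' * (τ - T a) := this
    _ = ε' * (∑ i ∈ F, sl i - ∑ i ∈ F, a.1.1 i) := by rw [hsuml]

lemma uts_key_s2 [CompleteSpace X] {S : Set X} (hS : IsClosed S) {x₀ : X}
    {C ε' δ : ℝ} (hC : 0 < C) (hε' : 0 < ε')
    {D : Set X} (hDC : ∀ v ∈ D, ‖v‖ ≤ C)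
    (hh : ∀ v ∈ D, ∀ y ∈ S, ‖y - x₀‖ ≤ δ → ∀ θ > (0:ℝ),
      ∃ t, 0 < t ∧ t < θ ∧ ∃ b : X, ‖b‖ ≤ 1 ∧ y + t • (v + ε' • b) ∈ S)
    {ι : Type} (F : Finset ι) (w : ι → ℝ) (z : ι → X)
    (hw : ∀ i ∈ F, 0 < w i) (hw1 : ∑ i ∈ F, w i = 1) (hz : ∀ i ∈ F, z i ∈ D)
    {x : X} (hx : x ∈ S) (hxd : ‖x - x₀‖ ≤ δ / 2)
    {η : ℝ} (hη : 0 < η) (hη' : η * (C + ε') ≤ δ / 2) :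
    ∃ y ∈ S, ‖y - (x + η • ∑ i ∈ F, w i • z i)‖ ≤ 2 * ε' * η := by
  classical
  set q := ε' * η / (C + ε') with hqdef
  have hCε : (0:ℝ) < C + ε' := by linarith
  have hq0 : 0 < q := by positivity
  have hzC : ∀ i ∈ F, ‖z i‖ ≤ C := fun i hi => hDC _ (hz i hi)
  have hp0 : UTSValid S x F w z ε' η q ((fun _ => 0), x) := by
    refine ⟨fun i _ => le_rfl, by simp [hη.le], hx, by simp, fun i _ j _ => by simp [hq0.le]⟩
  -- Zorn
  obtain ⟨m, hm⟩ := exists_maximal_of_chains_bounded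
    (r := fun a b : {p : (ι → ℝ) × X // UTSValid S x F w z ε' η q p} => UTSRel F z ε' a.1 b.1)
    (fun c hc => uts_chain_bound hS hε' hC.le hzC ⟨_, hp0⟩ c hc)
    (fun hab hbc => hab.trans' hbc)
  -- basic facts about m
  have hmnn := m.2.1
  have hmT := m.2.2.1
  have hmS := m.2.2.2.1
  have hmnorm := m.2.2.2.2.1
  have hminv := m.2.2.2.2.2
  have hTnn : 0 ≤ ∑ i ∈ F, m.1.1 i := Finset.sum_nonneg hmnn
  have hsumz : ‖∑ i ∈ F, m.1.1 i • z i‖ ≤ C * ∑ i ∈ F, m.1.1 i := by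
    calc ‖∑ i ∈ F, m.1.1 i • z i‖ ≤ ∑ i ∈ F, ‖m.1.1 i • z i‖ := norm_sum_le _ _
      _ ≤ ∑ i ∈ F, m.1.1 i * C := by
          refine Finset.sum_le_sum fun i hi => ?_
          rw [norm_smul, Real.norm_eq_abs, abs_of_nonneg (hmnn i hi)]
          exact mul_le_mul_of_nonneg_left (hzC i hi) (hmnn i hi)
      _ = C * ∑ i ∈ F, m.1.1 i := by rw [← Finset.sum_mul]; ring
  have hyx : ‖m.1.2 - x‖ ≤ (C + ε') * ∑ i ∈ F, m.1.1 i := by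
    calc ‖m.1.2 - x‖ = ‖(m.1.2 - x - ∑ i ∈ F, m.1.1 i • z i) + ∑ i ∈ F, m.1.1 i • z i‖ := by
          rw [sub_add_cancel]
      _ ≤ _ + _ := norm_add_le _ _
      _ ≤ ε' * ∑ i ∈ F, m.1.1 i + C * ∑ i ∈ F, m.1.1 i := add_le_add hmnorm hsumz
      _ = (C + ε') * ∑ i ∈ F, m.1.1 i := by ring
  have hyd : ‖m.1.2 - x₀‖ ≤ δ := by
    have h1 : (C + ε') * ∑ i ∈ F, m.1.1 i ≤ (C + ε') * η :=
      mul_le_mul_of_nonneg_left hmT hCε.le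
    calc ‖m.1.2 - x₀‖ = ‖(m.1.2 - x) + (x - x₀)‖ := by rw [sub_add_sub_cancel]
      _ ≤ ‖m.1.2 - x‖ + ‖x - x₀‖ := norm_add_le _ _
      _ ≤ δ / 2 + δ / 2 := add_le_add (by nlinarith) hxd
      _ = δ := by ring
  -- the total time of m is η
  have hTeq : ∑ i ∈ F, m.1.1 i = η := by
    by_contra hne
    have hTlt : ∑ i ∈ F, m.1.1 i < η := lt_of_le_of_ne hmT hne
    have hFne : F.Nonempty := Finset.nonempty_of_sum_ne_zero (by rw [hw1]; norm_num)
    obtain ⟨i₀, hi₀F, hi₀min⟩ := F.exists_min_image (fun i => m.1.1 i / w i) hFne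
    have hwi₀ := hw i₀ hi₀F
    have hθ : 0 < min (w i₀ * q) (η - ∑ i ∈ F, m.1.1 i) :=
      lt_min (by positivity) (by linarith)
    obtain ⟨t, ht0, htθ, b, hb, hyS⟩ := hh (z i₀) (hz i₀ hi₀F) m.1.2 hmS hyd _ hθ
    have htwq : t < w i₀ * q := lt_of_lt_of_le htθ (min_le_left _ _)
    have htη : t < η - ∑ i ∈ F, m.1.1 i := lt_of_lt_of_le htθ (min_le_right _ _)
    set s' : ι → ℝ := Function.update m.1.1 i₀ (m.1.1 i₀ + t) with hs'def
    have hs'i₀ : s' i₀ = m.1.1 i₀ + t := Function.update_self _ _ _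
    have hs'ne : ∀ i, i ≠ i₀ → s' i = m.1.1 i := fun i hi => Function.update_of_ne hi _ _
    have hs'sum : ∑ i ∈ F, s' i = ∑ i ∈ F, m.1.1 i + t := by
      rw [hs'def, Finset.sum_update_of_mem hi₀F]
      rw [Finset.sum_eq_sum_sdiff_singleton_add hi₀F (fun i => m.1.1 i)]
      ring
    have hs'ge : ∀ i ∈ F, m.1.1 i ≤ s' i := by
      intro i hi
      rcases eq_or_ne i i₀ with rfl | hne'
      · rw [hs'i₀]; linarith
      · rw [hs'ne i hne']
    set y' : X := m.1.2 + t • (z i₀ + ε' • b) with hy'def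
    have hkey : y' - m.1.2 - ∑ i ∈ F, (s' i - m.1.1 i) • z i = (t * ε') • b := by
      have hsum0 : ∑ i ∈ F, (s' i - m.1.1 i) • z i = t • z i₀ := by
        rw [Finset.sum_eq_single i₀]
        · rw [hs'i₀]; congr 1; ring
        · intro i hi hne'; rw [hs'ne i hne']; simp
        · intro h; exact absurd hi₀F h
      rw [hsum0, hy'def]
      rw [smul_add, smul_smul]
      abel
    have hnormkey : ‖y' - m.1.2 - ∑ i ∈ F, (s' i - m.1.1 i) • z i‖ ≤ ε' * t := by
      rw [hkey, norm_smul, Real.norm_eq_abs, abs_of_pos (by positivity)]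
      calc t * ε' * ‖b‖ ≤ t * ε' * 1 := by
            apply mul_le_mul_of_nonneg_left hb (by positivity)
        _ = ε' * t := by ring
    have hvalid' : UTSValid S x F w z ε' η q (s', y') := by
      refine ⟨fun i hi => le_trans (hmnn i hi) (hs'ge i hi), ?_, hyS, ?_, ?_⟩
      · rw [hs'sum]; linarith
      · have expand : y' - x - ∑ i ∈ F, s' i • z i =
            (m.1.2 - x - ∑ i ∈ F, m.1.1 i • z i) +
            (y' - m.1.2 - ∑ i ∈ F, (s' i - m.1.1 i) • z i) := by
          have : ∑ i ∈ F, s' i • z i =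
              ∑ i ∈ F, m.1.1 i • z i + ∑ i ∈ F, (s' i - m.1.1 i) • z i := by
            rw [← Finset.sum_add_distrib]
            refine Finset.sum_congr rfl fun i _ => ?_
            rw [← add_smul]; congr 1; ring
          rw [this]; abel
        calc ‖y' - x - ∑ i ∈ F, s' i • z i‖ ≤ _ + _ := expand ▸ norm_add_le _ _
          _ ≤ ε' * ∑ i ∈ F, m.1.1 i + ε' * t := add_le_add hmnorm hnormkey
          _ = ε' * ∑ i ∈ F, s' i := by rw [hs'sum]; ring
      · intro i hi j hj
        show s' i / w i ≤ s' j / w j + q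
        rcases eq_or_ne i i₀ with h' | hne'
        · subst h'
          rw [hs'i₀]
          have h1 : (m.1.1 i + t) / w i = m.1.1 i / w i + t / w i := add_div _ _ _
          have h2 : t / w i < q := (div_lt_iff₀ hwi₀).2 (by rw [mul_comm]; exact htwq)
          have h3 : m.1.1 i / w i ≤ m.1.1 j / w j := hi₀min j hj
          have h4 : m.1.1 j / w j ≤ s' j / w j :=
            (div_le_div_iff_of_pos_right (hw j hj)).2 (hs'ge j hj)
          rw [h1]; linarith
        · rw [hs'ne i hne']
          have h4 : m.1.1 j / w j ≤ s' j / w j :=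
            (div_le_div_iff_of_pos_right (hw j hj)).2 (hs'ge j hj)
          have := hminv i hi j hj
          linarith
    have hrel : UTSRel F z ε' m.1 (s', y') := by
      refine ⟨hs'ge, ?_⟩
      calc ‖y' - m.1.2 - ∑ i ∈ F, (s' i - m.1.1 i) • z i‖ ≤ ε' * t := hnormkey
        _ = ε' * (∑ i ∈ F, s' i - ∑ i ∈ F, m.1.1 i) := by rw [hs'sum]; ring
    have hrev := hm ⟨(s', y'), hvalid'⟩ hrel
    have : s' i₀ ≤ m.1.1 i₀ := hrev.1 i₀ hi₀F
    rw [hs'i₀] at this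
    linarith
  -- final estimate
  refine ⟨m.1.2, hmS, ?_⟩
  have hwsum : ∑ i ∈ F, w i * (m.1.1 i / w i) = η := by
    calc ∑ i ∈ F, w i * (m.1.1 i / w i) = ∑ i ∈ F, m.1.1 i := by
          refine Finset.sum_congr rfl fun i hi => ?_
          have := (hw i hi).ne'
          field_simp
      _ = η := hTeq
  have hrbound : ∀ i ∈ F, |m.1.1 i / w i - η| ≤ q := by
    intro i hi
    rw [abs_le]
    constructor
    · -- η ≤ m i / w i + q
      have : ∑ j ∈ F, w j * (m.1.1 j / w j) ≤ ∑ j ∈ F, w j * (m.1.1 i / w i + q) := by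
        refine Finset.sum_le_sum fun j hj => ?_
        exact mul_le_mul_of_nonneg_left (hminv j hj i hi) (hw j hj).le
      rw [hwsum] at this
      have h2 : ∑ j ∈ F, w j * (m.1.1 i / w i + q) = m.1.1 i / w i + q := by
        rw [← Finset.sum_mul, hw1, one_mul]
      rw [h2] at this
      linarith
    · have : ∑ j ∈ F, w j * (m.1.1 i / w i - q) ≤ ∑ j ∈ F, w j * (m.1.1 j / w j) := by
        refine Finset.sum_le_sum fun j hj => ?_
        refine mul_le_mul_of_nonneg_left ?_ (hw j hj).le
        have := hminv i hi j hj
        linarith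
      rw [hwsum] at this
      have h2 : ∑ j ∈ F, w j * (m.1.1 i / w i - q) = m.1.1 i / w i - q := by
        rw [← Finset.sum_mul, hw1, one_mul]
      rw [h2] at this
      linarith
  have hsbound : ∀ i ∈ F, |m.1.1 i - η * w i| ≤ q * w i := by
    intro i hi
    have hwi := hw i hi
    have h1 : m.1.1 i - η * w i = w i * (m.1.1 i / w i - η) := by
      field_simp
    rw [h1, abs_mul, abs_of_pos hwi]
    calc w i * |m.1.1 i / w i - η| ≤ w i * q :=
          mul_le_mul_of_nonneg_left (hrbound i hi) hwi.le
      _ = q * w i := mul_comm _ _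
  have hdiff : ‖∑ i ∈ F, m.1.1 i • z i - η • ∑ i ∈ F, w i • z i‖ ≤ q * C := by
    have heq : ∑ i ∈ F, m.1.1 i • z i - η • ∑ i ∈ F, w i • z i =
        ∑ i ∈ F, (m.1.1 i - η * w i) • z i := by
      rw [Finset.smul_sum, ← Finset.sum_sub_distrib]
      refine Finset.sum_congr rfl fun i _ => ?_
      rw [sub_smul, smul_smul]
    rw [heq]
    calc ‖∑ i ∈ F, (m.1.1 i - η * w i) • z i‖ ≤ ∑ i ∈ F, ‖(m.1.1 i - η * w i) • z i‖ :=
          norm_sum_le _ _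
      _ ≤ ∑ i ∈ F, q * w i * C := by
          refine Finset.sum_le_sum fun i hi => ?_
          rw [norm_smul, Real.norm_eq_abs]
          have h2 : ‖z i‖ ≤ C := hzC i hi
          have h3 := hsbound i hi
          have h4 : (0:ℝ) ≤ |m.1.1 i - η * w i| := abs_nonneg _
          calc |m.1.1 i - η * w i| * ‖z i‖ ≤ |m.1.1 i - η * w i| * C :=
                mul_le_mul_of_nonneg_left h2 h4
            _ ≤ q * w i * C := mul_le_mul_of_nonneg_right h3 hC.le
      _ = q * C := by
          rw [← Finset.sum_mul, ← Finset.mul_sum, hw1]; ring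
  have hqC : q * C ≤ ε' * η := by
    rw [hqdef]
    rw [div_mul_eq_mul_div, div_le_iff₀ hCε]
    nlinarith [mul_pos (mul_pos hε' hη) hε']
  calc ‖m.1.2 - (x + η • ∑ i ∈ F, w i • z i)‖
      = ‖(m.1.2 - x - ∑ i ∈ F, m.1.1 i • z i) +
        (∑ i ∈ F, m.1.1 i • z i - η • ∑ i ∈ F, w i • z i)‖ := by congr 1; abel
    _ ≤ _ + _ := norm_add_le _ _
    _ ≤ ε' * ∑ i ∈ F, m.1.1 i + q * C := add_le_add hmnorm hdiff
    _ = ε' * η + q * C := by rw [hTeq]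
    _ ≤ ε' * η + ε' * η := by linarith
    _ = 2 * ε' * η := by ring

end Aux

/-- The convex hull of a sequence uniform tangent set is a sequence uniform tangent set. -/
theorem convexHull_sequence_uts
    {X : Type*} [NormedAddCommGroup X] [NormedSpace ℝ X] [CompleteSpace X]
    (S : Set X) (hS : IsClosed S) (x₀ : X) (hx₀ : x₀ ∈ S)
    (D : Set X) (hD : Bornology.IsBounded D)
    (h : ∀ ε > (0:ℝ), ∃ δ > (0:ℝ), ∀ v ∈ D, ∀ x ∈ S, ‖x - x₀‖ ≤ δ →
      ∃ t : ℕ → ℝ, (∀ m, 0 < t m) ∧ Tendsto t atTop (nhds 0) ∧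
        ∀ m, ∃ b : X, ‖b‖ ≤ 1 ∧ x + t m • (v + ε • b) ∈ S) :
    ∀ ε > (0:ℝ), ∃ δ > (0:ℝ), ∀ v ∈ convexHull ℝ D, ∀ x ∈ S, ‖x - x₀‖ ≤ δ →
      ∃ t : ℕ → ℝ, (∀ m, 0 < t m) ∧ Tendsto t atTop (nhds 0) ∧
        ∀ m, ∃ b : X, ‖b‖ ≤ 1 ∧ x + t m • (v + ε • b) ∈ S := by
  classical
  intro ε hε
  set ε' := ε / 2 with hε'def
  have hε' : 0 < ε' := by positivity
  obtain ⟨C₀, hC₀⟩ := hD.exists_norm_le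
  set C := max C₀ 1 with hCdef
  have hC : 0 < C := lt_of_lt_of_le one_pos (le_max_right _ _)
  have hDC : ∀ v ∈ D, ‖v‖ ≤ C := fun v hv => (hC₀ v hv).trans (le_max_left _ _)
  obtain ⟨δ, hδ0, hδ⟩ := h ε' hε'
  have hh : ∀ v ∈ D, ∀ y ∈ S, ‖y - x₀‖ ≤ δ → ∀ θ > (0:ℝ),
      ∃ t, 0 < t ∧ t < θ ∧ ∃ b : X, ‖b‖ ≤ 1 ∧ y + t • (v + ε' • b) ∈ S := by
    intro v hv y hy hyd θ hθ
    obtain ⟨t, hpos, htend, hb⟩ := hδ v hv y hy hyd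
    obtain ⟨mm, hmm⟩ := (htend.eventually (gt_mem_nhds hθ)).exists
    exact ⟨t mm, hpos mm, hmm, hb mm⟩
  refine ⟨δ / 2, by positivity, ?_⟩
  intro v hv x hxS hxd
  rw [_root_.convexHull_eq] at hv
  obtain ⟨ι, F, w, z, hw0, hw1, hzD, hcm⟩ := hv
  have hveq : v = ∑ i ∈ F, w i • z i := by
    rw [← hcm, Finset.centerMass_eq_of_sum_1 _ _ hw1]
  set F' := F.filter (fun i => w i ≠ 0) with hF'def
  have hwpos : ∀ i ∈ F', 0 < w i := by
    intro i hi
    rw [hF'def, Finset.mem_filter] at hi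
    exact lt_of_le_of_ne (hw0 i hi.1) (Ne.symm hi.2)
  have hw1' : ∑ i ∈ F', w i = 1 := by
    rw [hF'def, Finset.sum_filter_ne_zero, hw1]
  have hzD' : ∀ i ∈ F', z i ∈ D := by
    intro i hi
    rw [hF'def, Finset.mem_filter] at hi
    exact hzD i hi.1
  have hveq' : v = ∑ i ∈ F', w i • z i := by
    rw [hveq, hF'def]
    symm
    apply Finset.sum_filter_of_ne
    intro i hi hne hwi
    exact hne (by rw [hwi, zero_smul])
  set η₀ := (δ / 2) / (C + ε') with hη₀def
  have hCε : (0:ℝ) < C + ε' := by positivity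
  have hη₀ : 0 < η₀ := by positivity
  set t : ℕ → ℝ := fun m => η₀ / (m + 1) with htdef
  have htpos : ∀ m, 0 < t m := fun m => by positivity
  have httend : Tendsto t atTop (nhds 0) := by
    have : Tendsto (fun m : ℕ => η₀ * (1 / ((m:ℝ) + 1))) atTop (nhds (η₀ * 0)) :=
      tendsto_const_nhds.mul tendsto_one_div_add_atTop_nhds_zero_nat
    simpa [htdef, div_eq_mul_inv, mul_comm, one_div] using this
  refine ⟨t, htpos, httend, ?_⟩
  intro m
  have htle : t m ≤ η₀ := by
    rw [htdef]
    apply div_le_self hη₀.le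
    have : (0:ℝ) ≤ (m:ℝ) := Nat.cast_nonneg m
    linarith
  have hηbound : t m * (C + ε') ≤ δ / 2 := by
    calc t m * (C + ε') ≤ η₀ * (C + ε') := mul_le_mul_of_nonneg_right htle hCε.le
      _ = δ / 2 := by rw [hη₀def]; field_simp
  obtain ⟨y, hyS, hynorm⟩ := uts_key_s2 hS hC hε' hDC hh F' w z hwpos hw1' hzD' hxS hxd
    (htpos m) hηbound
  rw [← hveq'] at hynorm
  have hεt : 0 < ε * t m := by positivity
  set b : X := (ε * t m)⁻¹ • (y - (x + t m • v)) with hbdef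
  have hbnorm : ‖b‖ ≤ 1 := by
    rw [hbdef, norm_smul, Real.norm_eq_abs, abs_of_pos (inv_pos.2 hεt)]
    rw [← div_eq_inv_mul, div_le_one hεt]
    calc ‖y - (x + t m • v)‖ ≤ 2 * ε' * t m := hynorm
      _ = ε * t m := by rw [hε'def]; ring
  refine ⟨b, hbnorm, ?_⟩
  have hbeq : (t m * ε) • b = y - (x + t m • v) := by
    rw [hbdef, smul_smul]
    rw [show (t m * ε) * (ε * t m)⁻¹ = 1 by
      rw [mul_comm (t m) ε]; exact mul_inv_cancel₀ hεt.ne']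
    rw [one_smul]
  have : x + t m • (v + ε • b) = x + t m • v + (t m * ε) • b := by
    rw [smul_add, smul_smul]; abel
  rw [this, hbeq]
  have : x + t m • v + (y - (x + t m • v)) = y := by abel
  rw [this]
  exact hyS
end

section
/- Let X be a Banach space, S a closed subset of X, x₀ ∈ S, and let D be a uniform tangent set to S at x₀. Then every element of D is a tangent vector to S at x₀ in Rockafellar's sense; i.e., D is contained in the Clarke tangent cone to S at x₀. -/
open Metric

open Filter Topology

/-- A uniform tangent set is contained in the Clarke tangent cone. -/
theorem uts_subset_clarkeTangentCone
    {X : Type*} [NormedAddCommGroup X] [NormedSpace ℝ X] [CompleteSpace X]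
    (S : Set X) (hS : IsClosed S) (x₀ : X) (hx₀ : x₀ ∈ S)
    (D : Set X) (hD : Bornology.IsBounded D)
    (h : ∀ ε > (0:ℝ), ∃ δ > (0:ℝ), ∀ v ∈ D, ∀ x ∈ S, ‖x - x₀‖ ≤ δ →
      ∃ lam > (0:ℝ), ∀ t ∈ Set.Icc (0:ℝ) lam,
        ∃ b : X, ‖b‖ ≤ 1 ∧ x + t • (v + ε • b) ∈ S) :
    D ⊆ {v : X | ∀ ε > (0:ℝ), ∃ δ > (0:ℝ), ∃ lam > (0:ℝ), ∀ x ∈ S, ‖x - x₀‖ ≤ δ →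
      ∀ t ∈ Set.Icc (0:ℝ) lam, ∃ b : X, ‖b‖ ≤ 1 ∧ x + t • (v + ε • b) ∈ S} := by
  intro v hv ε hε
  have hε2 : (0:ℝ) < ε/2 := by linarith
  obtain ⟨δ', hδ', H⟩ := h (ε/2) hε2
  obtain ⟨K, hKdef⟩ : ∃ K : ℝ, K = ‖v‖ + ε/2 := ⟨_, rfl⟩
  have hK0 : 0 < K := by have := norm_nonneg v; rw [hKdef]; linarith
  refine ⟨δ'/2, by linarith, δ'/(2*(K+1)), by positivity, ?_⟩
  intro x hxS hxδ t ht
  obtain ⟨ht0, htlam⟩ := ht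
  have htK : t * K ≤ δ'/2 := by
    have h1 : t * (2*(K+1)) ≤ δ' := (le_div_iff₀ (by positivity)).mp htlam
    nlinarith
  set P : ℝ × X → Prop :=
    fun p => 0 ≤ p.1 ∧ p.1 ≤ t ∧ p.2 ∈ S ∧ ‖p.2 - x - p.1 • v‖ ≤ ε/2 * p.1 with hPdef
  have hbase : P (0, x) := by
    refine ⟨le_rfl, ht0, hxS, ?_⟩
    simp
  have htrans : ∀ {a b c : {p : ℝ × X // P p}},
      (a.1.1 ≤ b.1.1 ∧ ‖b.1.2 - a.1.2‖ ≤ K * (b.1.1 - a.1.1)) →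
      (b.1.1 ≤ c.1.1 ∧ ‖c.1.2 - b.1.2‖ ≤ K * (c.1.1 - b.1.1)) →
      (a.1.1 ≤ c.1.1 ∧ ‖c.1.2 - a.1.2‖ ≤ K * (c.1.1 - a.1.1)) := by
    rintro a b c ⟨h1, h2⟩ ⟨h3, h4⟩
    refine ⟨h1.trans h3, ?_⟩
    have htri : ‖c.1.2 - a.1.2‖ ≤ ‖c.1.2 - b.1.2‖ + ‖b.1.2 - a.1.2‖ := by
      have := dist_triangle c.1.2 b.1.2 a.1.2
      simpa [dist_eq_norm] using this
    nlinarith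
  have hchain : ∀ c : Set {p : ℝ × X // P p},
      IsChain (fun p q => p.1.1 ≤ q.1.1 ∧ ‖q.1.2 - p.1.2‖ ≤ K * (q.1.1 - p.1.1)) c →
      ∃ ub : {p : ℝ × X // P p}, ∀ a ∈ c, a.1.1 ≤ ub.1.1 ∧ ‖ub.1.2 - a.1.2‖ ≤ K * (ub.1.1 - a.1.1) := by
    intro c hc
    have hrrefl : ∀ a : {p : ℝ × X // P p},
        a.1.1 ≤ a.1.1 ∧ ‖a.1.2 - a.1.2‖ ≤ K * (a.1.1 - a.1.1) := fun a => ⟨le_rfl, by simp⟩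
    rcases c.eq_empty_or_nonempty with rfl | hne
    · exact ⟨⟨(0, x), hbase⟩, by simp⟩
    obtain ⟨p₀, hp₀⟩ := hne
    set A : Set ℝ := (fun p : {p : ℝ × X // P p} => p.1.1) '' c with hAdef
    have hAne : A.Nonempty := ⟨_, ⟨p₀, hp₀, rfl⟩⟩
    have hAbdd : BddAbove A := ⟨t, by rintro _ ⟨q, hq, rfl⟩; exact q.2.2.1⟩
    set L := sSup A with hLdef
    have hle : ∀ p ∈ c, p.1.1 ≤ L := fun p hp => le_csSup hAbdd ⟨p, hp, rfl⟩
    by_cases hatt : ∃ p ∈ c, p.1.1 = L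
    · obtain ⟨p, hpc, hpL⟩ := hatt
      refine ⟨p, fun q hq => ?_⟩
      rcases eq_or_ne q p with rfl | hqp
      · exact hrrefl q
      rcases hc hq hpc hqp with hr | hr
      · exact hr
      · have heq : q.1.1 = p.1.1 := le_antisymm (hpL ▸ hle q hq) hr.1
        have h2 : q.1.2 = p.1.2 := by
          have := hr.2
          rw [heq] at this
          simp at this
          have := norm_le_zero_iff.mp (by simpa using this)
          exact sub_eq_zero.mp this
        rw [heq, h2]
        exact hrrefl p
    · push_neg at hatt
      have hlt : ∀ p ∈ c, p.1.1 < L := fun p hp => lt_of_le_of_ne (hle p hp) (hatt p hp)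
      have hsel : ∀ n : ℕ, ∃ p, p ∈ c ∧ L - 1/(n+1) < p.1.1 := by
        intro n
        have : L - 1/(n+1) < L := by
          have : (0:ℝ) < 1/(n+1) := by positivity
          linarith
        obtain ⟨a, ha, hlt'⟩ := exists_lt_of_lt_csSup hAne this
        obtain ⟨p, hpc, rfl⟩ := ha
        exact ⟨p, hpc, hlt'⟩
      choose g hgc hgs using hsel
      have hcomp : ∀ m n : ℕ, ‖(g m).1.2 - (g n).1.2‖ ≤ K * |(g m).1.1 - (g n).1.1| := by
        intro m n
        rcases eq_or_ne (g m) (g n) with he | hne'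
        · rw [he]; simp
        rcases hc (hgc m) (hgc n) hne' with hr | hr
        · -- (g m) ≺ (g n)
          rw [norm_sub_rev]
          refine hr.2.trans ?_
          have : (g n).1.1 - (g m).1.1 ≤ |(g m).1.1 - (g n).1.1| := by
            rw [abs_sub_comm]; exact le_abs_self _
          nlinarith
        · refine hr.2.trans ?_
          have : (g m).1.1 - (g n).1.1 ≤ |(g m).1.1 - (g n).1.1| := le_abs_self _
          nlinarith
      have hinterval : ∀ n N : ℕ, N ≤ n → L - 1/(N+1) < (g n).1.1 := by
        intro n N hNn
        have h1 : (1:ℝ)/(n+1) ≤ 1/(N+1) := by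
          apply one_div_le_one_div_of_le (by positivity)
          exact_mod_cast by omega
        have := hgs n
        linarith
      have hcauchy : CauchySeq (fun n => (g n).1.2) := by
        apply cauchySeq_of_le_tendsto_0 (fun N : ℕ => K * (1/((N:ℝ)+1)))
        · intro n m N hNn hNm
          rw [dist_eq_norm]
          refine (hcomp n m).trans ?_
          have h1 : |(g n).1.1 - (g m).1.1| ≤ 1/(N+1) := by
            have hn1 := hinterval n N hNn
            have hm1 := hinterval m N hNm
            have hn2 := hle _ (hgc n)
            have hm2 := hle _ (hgc m)
            rw [abs_sub_le_iff]
            constructor <;> linarith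
          exact mul_le_mul_of_nonneg_left h1 hK0.le
        · simpa using (tendsto_one_div_add_atTop_nhds_zero_nat).const_mul K
      obtain ⟨yl, hyl⟩ := cauchySeq_tendsto_of_complete hcauchy
      have hsL : Tendsto (fun n => (g n).1.1) atTop (𝓝 L) := by
        have hlow : Tendsto (fun n : ℕ => L - 1/(n+1:ℝ)) atTop (𝓝 L) := by
          have := (tendsto_const_nhds (x := L) (f := atTop (α := ℕ))).sub
            tendsto_one_div_add_atTop_nhds_zero_nat
          simpa using this
        exact tendsto_of_tendsto_of_tendsto_of_le_of_le hlow tendsto_const_nhds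
          (fun n => (hgs n).le) (fun n => hle _ (hgc n))
      have hL0 : 0 ≤ L := le_trans (g 0).2.1 (hle _ (hgc 0))
      have hLt : L ≤ t := csSup_le hAne (by rintro _ ⟨q, hq, rfl⟩; exact q.2.2.1)
      have hylS : yl ∈ S := hS.mem_of_tendsto hyl (Eventually.of_forall fun n => (g n).2.2.2.1)
      have hnormle : ‖yl - x - L • v‖ ≤ ε/2 * L := by
        have h1 : Tendsto (fun n => ‖(g n).1.2 - x - (g n).1.1 • v‖) atTop
            (𝓝 ‖yl - x - L • v‖) :=
          ((hyl.sub tendsto_const_nhds).sub (hsL.smul_const v)).norm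
        exact le_of_tendsto_of_tendsto' h1 (hsL.const_mul (ε/2))
          (fun n => (g n).2.2.2.2)
      refine ⟨⟨(L, yl), hL0, hLt, hylS, hnormle⟩, ?_⟩
      intro q hq
      refine ⟨hle q hq, ?_⟩
      have hqL : q.1.1 < L := hlt q hq
      have hev : ∀ᶠ n in atTop, ‖(g n).1.2 - q.1.2‖ ≤ K * (L - q.1.1) := by
        have hev' : ∀ᶠ n : ℕ in atTop, (1:ℝ)/(n+1) < L - q.1.1 :=
          tendsto_one_div_add_atTop_nhds_zero_nat.eventually_lt_const (by linarith)
        filter_upwards [hev'] with n hn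
        have hgn : q.1.1 < (g n).1.1 := by have := hgs n; linarith
        have hne' : q ≠ g n := by
          intro he; rw [he] at hgn; exact lt_irrefl _ hgn
        rcases hc hq (hgc n) hne' with hr | hr
        · refine hr.2.trans ?_
          have := hle _ (hgc n)
          nlinarith
        · exact absurd hr.1 (not_le.mpr hgn)
      have h1 : Tendsto (fun n => ‖(g n).1.2 - q.1.2‖) atTop (𝓝 ‖yl - q.1.2‖) :=
        (hyl.sub tendsto_const_nhds).norm
      exact le_of_tendsto h1 hev
  obtain ⟨m, hmax⟩ := exists_maximal_of_chains_bounded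
    (r := fun p q : {p : ℝ × X // P p} =>
      p.1.1 ≤ q.1.1 ∧ ‖q.1.2 - p.1.2‖ ≤ K * (q.1.1 - p.1.1)) hchain htrans
  have hTeq : m.1.1 = t := by
    by_contra hne
    have hTlt : m.1.1 < t := lt_of_le_of_ne m.2.2.1 hne
    have hT0 : 0 ≤ m.1.1 := m.2.1
    have hym0 : ‖m.1.2 - x₀‖ ≤ δ' := by
      have hdec : m.1.2 - x₀ = (m.1.2 - x - m.1.1 • v) + m.1.1 • v + (x - x₀) := by abel
      have htri : ‖m.1.2 - x₀‖ ≤ ‖m.1.2 - x - m.1.1 • v‖ + ‖m.1.1 • v‖ + ‖x - x₀‖ := by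
        rw [hdec]; exact norm_add₃_le
      have hsm : ‖m.1.1 • v‖ = m.1.1 * ‖v‖ := by
        rw [norm_smul, Real.norm_eq_abs, abs_of_nonneg hT0]
      have hnm := m.2.2.2.2
      have hTK : m.1.1 * K ≤ t * K := mul_le_mul_of_nonneg_right m.2.2.1 hK0.le
      rw [hsm] at htri
      rw [hKdef] at hTK htK
      nlinarith
    obtain ⟨lam₂, hlam₂, Hy⟩ := H v hv m.1.2 m.2.2.2.1 hym0
    set t' := min (t - m.1.1) lam₂ with ht'def
    have ht'0 : 0 < t' := lt_min (by linarith) hlam₂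
    obtain ⟨b, hb, hin⟩ := Hy t' ⟨ht'0.le, min_le_right _ _⟩
    have hP' : P (m.1.1 + t', m.1.2 + t' • (v + (ε/2) • b)) := by
      refine ⟨by linarith, ?_, hin, ?_⟩
      · have := min_le_left (t - m.1.1) lam₂
        simp only [ht'def]
        linarith [min_le_left (t - m.1.1) lam₂]
      · have hdec : m.1.2 + t' • (v + (ε/2) • b) - x - (m.1.1 + t') • v
            = (m.1.2 - x - m.1.1 • v) + (t' * (ε/2)) • b := by
          simp [smul_add, add_smul, smul_smul]; abel
        simp only [hdec]
        refine (norm_add_le _ _).trans ?_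
        have h1 : ‖(t' * (ε/2)) • b‖ ≤ t' * (ε/2) := by
          rw [norm_smul, Real.norm_eq_abs, abs_of_nonneg (by positivity)]
          have := mul_le_mul_of_nonneg_left hb (by positivity : (0:ℝ) ≤ t' * (ε/2))
          simpa using this
        have h2 := m.2.2.2.2
        nlinarith
    have hrm : m.1.1 ≤ (⟨_, hP'⟩ : {p : ℝ × X // P p}).1.1 ∧
        ‖(⟨_, hP'⟩ : {p : ℝ × X // P p}).1.2 - m.1.2‖ ≤
          K * ((⟨_, hP'⟩ : {p : ℝ × X // P p}).1.1 - m.1.1) := by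
      refine ⟨by simp; linarith, ?_⟩
      have : ‖t' • (v + (ε/2) • b)‖ ≤ t' * K := by
        rw [norm_smul, Real.norm_eq_abs, abs_of_nonneg ht'0.le]
        have : ‖v + (ε/2) • b‖ ≤ ‖v‖ + ε/2 := by
          refine (norm_add_le _ _).trans ?_
          have : ‖(ε/2) • b‖ ≤ ε/2 := by
            rw [norm_smul, Real.norm_eq_abs, abs_of_nonneg hε2.le]
            have := mul_le_mul_of_nonneg_left hb hε2.le
            simpa using this
          linarith
        rw [hKdef]
        exact mul_le_mul_of_nonneg_left this ht'0.le
      calc ‖m.1.2 + t' • (v + (ε/2) • b) - m.1.2‖ = ‖t' • (v + (ε/2) • b)‖ := by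
            congr 1; abel
        _ ≤ t' * K := this
        _ = K * (m.1.1 + t' - m.1.1) := by ring
    have := (hmax _ hrm).1
    simp at this
    linarith
  rcases eq_or_lt_of_le ht0 with h0 | h0
  · exact ⟨0, by simp, by simpa [← h0] using hxS⟩
  · have hnm : ‖m.1.2 - x - t • v‖ ≤ ε/2 * t := by
      have := m.2.2.2.2; rwa [hTeq] at this
    have htε : (0:ℝ) < t * ε := mul_pos h0 hε
    obtain ⟨ym, hymeq⟩ : ∃ ym : X, ym = m.1.2 := ⟨_, rfl⟩
    have hymS : ym ∈ S := by rw [hymeq]; exact m.2.2.2.1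
    have hnm' : ‖ym - x - t • v‖ ≤ ε/2 * t := by rw [hymeq]; exact hnm
    refine ⟨(t*ε)⁻¹ • (ym - x - t • v), ?_, ?_⟩
    · rw [norm_smul, Real.norm_eq_abs, abs_of_nonneg (inv_nonneg.mpr htε.le)]
      rw [inv_mul_le_iff₀ htε]
      nlinarith
    · have key : x + t • (v + ε • ((t*ε)⁻¹ • (ym - x - t • v))) = ym := by
        rw [smul_add, smul_smul, smul_smul]
        rw [mul_inv_cancel₀ htε.ne', one_smul]
        abel
      rw [key]
      exact hymS
end

section
/- Let X be a Banach space, S ⊆ X, x ∈ S, and suppose the Clarke tangent cone T̂_S(x) to S at x is separable. Then there exists a uniform tangent set D to S at x which generates T̂_S(x), i.e., the closure of the conical hull of D equals T̂_S(x). -/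
open Metric

/-- The Clarke tangent cone to `S` at `x` (Rockafellar's definition). -/
def clarkeTangentCone {X : Type*} [NormedAddCommGroup X] [NormedSpace ℝ X]
    (S : Set X) (x : X) : Set X :=
  {v : X | ∀ ε > (0:ℝ), ∃ δ > (0:ℝ), ∃ lam > (0:ℝ), ∀ y ∈ S, ‖y - x‖ ≤ δ →
    ∀ t ∈ Set.Icc (0:ℝ) lam, ∃ b : X, ‖b‖ ≤ 1 ∧ y + t • (v + ε • b) ∈ S}

theorem clarkeTangentCone.zero_mem' {X : Type*} [NormedAddCommGroup X] [NormedSpace ℝ X]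
    {S : Set X} {x : X} : (0:X) ∈ clarkeTangentCone S x := by
  intro ε hε
  exact ⟨1, one_pos, 1, one_pos, fun y hy _ t ht => ⟨0, by simp, by simpa using hy⟩⟩

theorem clarkeTangentCone.smul_mem' {X : Type*} [NormedAddCommGroup X] [NormedSpace ℝ X]
    {S : Set X} {x : X} {v : X} (hv : v ∈ clarkeTangentCone S x) {α : ℝ} (hα : 0 < α) :
    α • v ∈ clarkeTangentCone S x := by
  intro ε hε
  obtain ⟨δ, hδ, lam, hlam, H⟩ := hv (ε / α) (div_pos hε hα)
  refine ⟨δ, hδ, lam / α, div_pos hlam hα, fun y hy hyx t ht => ?_⟩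
  obtain ⟨ht0, ht1⟩ := ht
  have htα : t * α ∈ Set.Icc (0:ℝ) lam :=
    ⟨by positivity, by rw [← le_div_iff₀ hα]; exact ht1⟩
  obtain ⟨b, hb, hbS⟩ := H y hy hyx (t * α) htα
  refine ⟨b, hb, ?_⟩
  have hc : t * α * (ε / α) = t * ε := by field_simp
  have key : (t * α) • (v + (ε / α) • b) = t • (α • v + ε • b) := by
    rw [smul_add, smul_add, smul_smul, smul_smul, smul_smul, hc]
  rwa [key] at hbS

theorem clarkeTangentCone.isClosed' {X : Type*} [NormedAddCommGroup X] [NormedSpace ℝ X]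
    {S : Set X} {x : X} : IsClosed (clarkeTangentCone S x) := by
  refine isClosed_of_closure_subset fun v hv => ?_
  intro ε hε
  obtain ⟨w, hw, hwv⟩ := Metric.mem_closure_iff.1 hv (ε / 2) (by positivity)
  obtain ⟨δ, hδ, lam, hlam, H⟩ := hw (ε / 2) (by positivity)
  refine ⟨δ, hδ, lam, hlam, fun y hy hyx t ht => ?_⟩
  obtain ⟨b, hb, hbS⟩ := H y hy hyx t ht
  refine ⟨ε⁻¹ • (w - v + (ε / 2) • b), ?_, ?_⟩
  · have h1 : ‖w - v + (ε / 2) • b‖ ≤ ε := by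
      calc ‖w - v + (ε / 2) • b‖ ≤ ‖w - v‖ + ‖(ε / 2) • b‖ := norm_add_le _ _
        _ ≤ ε / 2 + (ε / 2) * 1 := by
            gcongr
            · rw [← dist_eq_norm]; exact (dist_comm w v ▸ hwv).le
            · rw [norm_smul, Real.norm_eq_abs, abs_of_pos (by positivity)]
              gcongr
        _ = ε := by ring
    rw [norm_smul, Real.norm_eq_abs, abs_of_pos (by positivity)]
    rw [inv_mul_le_iff₀ hε, mul_one]
    exact h1
  · have : v + ε • (ε⁻¹ • (w - v + (ε / 2) • b)) = w + (ε / 2) • b := by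
      rw [smul_smul, mul_inv_cancel₀ hε.ne', one_smul]
      abel
    rwa [this]

/-- If the Clarke tangent cone is separable, there is a uniform tangent set generating it. -/
theorem exists_uts_generating_clarkeTangentCone
    {X : Type*} [NormedAddCommGroup X] [NormedSpace ℝ X] [CompleteSpace X]
    (S : Set X) (x : X) (hx : x ∈ S)
    (hsep : TopologicalSpace.IsSeparable (clarkeTangentCone S x)) :
    ∃ D : Set X, Bornology.IsBounded D ∧
      (∀ ε > (0:ℝ), ∃ δ > (0:ℝ), ∀ v ∈ D, ∀ y ∈ S, ‖y - x‖ ≤ δ →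
        ∃ lam > (0:ℝ), ∀ t ∈ Set.Icc (0:ℝ) lam,
          ∃ b : X, ‖b‖ ≤ 1 ∧ y + t • (v + ε • b) ∈ S) ∧
      closure {y : X | ∃ α > (0:ℝ), ∃ d ∈ D, y = α • d} = clarkeTangentCone S x := by
  obtain ⟨c, hcT, hcc, hTc⟩ := hsep.exists_countable_dense_subset
  have hc_ne : c.Nonempty := by
    rcases Set.eq_empty_or_nonempty c with h | h
    · exfalso
      have := hTc clarkeTangentCone.zero_mem'
      simp [h] at this
    · exact h
  obtain ⟨v, hv⟩ := Set.Countable.exists_eq_range hcc hc_ne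
  set a : ℕ → ℝ := fun n => ((n:ℝ)+1)⁻¹ * (‖v n‖ + 1)⁻¹ with ha
  have ha_pos : ∀ n, 0 < a n := fun n => by positivity
  have hinv1 : ∀ n : ℕ, ((n:ℝ)+1)⁻¹ ≤ 1 := by
    intro n
    rw [inv_le_one₀ (by positivity)]
    simp
  have hinv2 : ∀ n : ℕ, (‖v n‖ + 1)⁻¹ * ‖v n‖ ≤ 1 := by
    intro n
    rw [inv_mul_le_iff₀ (by positivity), mul_one]
    linarith [norm_nonneg (v n)]
  have ha_le1 : ∀ n, a n ≤ 1 := by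
    intro n
    have h3 : (‖v n‖ + 1)⁻¹ ≤ 1 := by
      rw [inv_le_one₀ (by positivity)]
      linarith [norm_nonneg (v n)]
    exact mul_le_one₀ (hinv1 n) (by positivity) h3
  have hanorm : ∀ n, a n * ‖v n‖ ≤ ((n:ℝ)+1)⁻¹ := by
    intro n
    calc a n * ‖v n‖ = ((n:ℝ)+1)⁻¹ * ((‖v n‖ + 1)⁻¹ * ‖v n‖) := by ring
      _ ≤ ((n:ℝ)+1)⁻¹ * 1 := mul_le_mul_of_nonneg_left (hinv2 n) (by positivity)
      _ = ((n:ℝ)+1)⁻¹ := by ring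
  have hvT : ∀ n, v n ∈ clarkeTangentCone S x := fun n => hcT (hv ▸ ⟨n, rfl⟩)
  refine ⟨Set.range (fun n => a n • v n), ?_, ?_, ?_⟩
  · -- bounded
    rw [isBounded_iff_forall_norm_le]
    refine ⟨1, ?_⟩
    rintro _ ⟨n, rfl⟩
    rw [norm_smul, Real.norm_eq_abs, abs_of_pos (ha_pos n)]
    exact le_trans (hanorm n) (hinv1 n)
  · -- uniform tangent set
    intro ε hε
    set M := ⌈ε⁻¹⌉₊ with hM
    have hM0 : 0 < M := Nat.ceil_pos.mpr (by positivity)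
    choose δf hδf lamf hlamf Hf using fun n => hvT n ε hε
    have hne : (Finset.range M).Nonempty := ⟨0, Finset.mem_range.2 hM0⟩
    set δ := min 1 ((Finset.range M).inf' hne δf) with hδdef
    have hδpos : 0 < δ :=
      lt_min one_pos ((Finset.lt_inf'_iff hne).2 fun n _ => hδf n)
    refine ⟨δ, hδpos, ?_⟩
    rintro _ ⟨n, rfl⟩ y hy hyx
    by_cases hn : n < M
    · -- use the Clarke property of v n
      have hδle : δ ≤ δf n :=
        le_trans (min_le_right _ _) (Finset.inf'_le _ (Finset.mem_range.2 hn))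
      refine ⟨lamf n / a n, div_pos (hlamf n) (ha_pos n), fun t ht => ?_⟩
      have htn : t * a n ∈ Set.Icc (0:ℝ) (lamf n) :=
        ⟨mul_nonneg ht.1 (ha_pos n).le, by rw [← le_div_iff₀ (ha_pos n)]; exact ht.2⟩
      obtain ⟨b, hb, hbS⟩ := Hf n y hy (le_trans hyx hδle) (t * a n) htn
      refine ⟨a n • b, ?_, ?_⟩
      · rw [norm_smul, Real.norm_eq_abs, abs_of_pos (ha_pos n)]
        exact mul_le_one₀ (ha_le1 n) (norm_nonneg b) hb
      · have key : t • (a n • v n + ε • a n • b) = (t * a n) • (v n + ε • b) := by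
          rw [smul_comm ε (a n) b, ← smul_add, smul_smul]
        rwa [key]
    · -- the vector is tiny: cancel it
      push_neg at hn
      have hεn : ε⁻¹ ≤ (n:ℝ) + 1 := by
        calc ε⁻¹ ≤ (M : ℝ) := Nat.le_ceil _
          _ ≤ (n:ℝ) := Nat.cast_le.2 hn
          _ ≤ (n:ℝ) + 1 := by linarith
      have hinv : ((n:ℝ)+1)⁻¹ ≤ ε := by
        rw [← inv_inv ε]
        exact inv_anti₀ (by positivity) hεn
      refine ⟨1, one_pos, fun t ht => ?_⟩
      refine ⟨-((ε⁻¹ * a n) • v n), ?_, ?_⟩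
      · rw [norm_neg, norm_smul, Real.norm_eq_abs,
          abs_of_pos (by positivity : (0:ℝ) < ε⁻¹ * a n)]
        calc ε⁻¹ * a n * ‖v n‖ = ε⁻¹ * (a n * ‖v n‖) := by ring
          _ ≤ ε⁻¹ * ((n:ℝ)+1)⁻¹ := by gcongr; exact hanorm n
          _ ≤ ε⁻¹ * ε := by gcongr
          _ = 1 := inv_mul_cancel₀ hε.ne'
      · have key : a n • v n + ε • -((ε⁻¹ * a n) • v n) = 0 := by
          rw [smul_neg, smul_smul, ← mul_assoc, mul_inv_cancel₀ hε.ne', one_mul]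
          abel
        rw [key, smul_zero, add_zero]
        exact hy
  · -- closure of conical hull equals the cone
    apply Set.Subset.antisymm
    · have hcl := (clarkeTangentCone.isClosed' (S := S) (x := x)).closure_eq
      rw [← hcl]
      apply closure_mono
      rintro z ⟨α, hα, d, ⟨n, rfl⟩, rfl⟩
      have := clarkeTangentCone.smul_mem' (hvT n) (mul_pos hα (ha_pos n))
      rwa [← smul_smul] at this
    · intro z hz
      have hzc : z ∈ closure c := hTc hz
      rw [hv] at hzc
      refine closure_mono ?_ hzc
      rintro _ ⟨n, rfl⟩
      exact ⟨(a n)⁻¹, by positivity, a n • v n, ⟨n, rfl⟩,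
        by rw [smul_smul, inv_mul_cancel₀ (ha_pos n).ne', one_smul]⟩
end

section
/- Let X be a Banach space, let {vₙ} be a dense subset of the intersection of the Clarke tangent cone T̂_S(x) with the unit sphere, and let {λₙ} be positive reals tending to 0. Then the set D = {λₙ vₙ : n ∈ ℕ} is a uniform tangent set to S at x whose generated cone (closure of the conical hull) equals T̂_S(x). -/
open Metric Filter

lemma clarke_smul {X : Type*} [NormedAddCommGroup X] [NormedSpace ℝ X]
    {S : Set X} {x u : X} (hu : u ∈ clarkeTangentCone S x) {c : ℝ} (hc : 0 < c) :
    c • u ∈ clarkeTangentCone S x := by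
  intro ε hε
  obtain ⟨δ, hδ, μ, hμ, H⟩ := hu (ε / c) (div_pos hε hc)
  refine ⟨δ, hδ, μ / c, div_pos hμ hc, fun y hy hyx t ht => ?_⟩
  obtain ⟨b, hb, hbS⟩ := H y hy hyx (t * c)
    ⟨mul_nonneg ht.1 hc.le, by
      have := mul_le_mul_of_nonneg_right ht.2 hc.le
      rwa [div_mul_cancel₀ _ (ne_of_gt hc)] at this⟩
  refine ⟨b, hb, ?_⟩
  have key : t • (c • u + ε • b) = (t * c) • (u + (ε / c) • b) := by
    match_scalars <;> field_simp <;> ring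
  rw [key]; exact hbS

lemma clarke_closed {X : Type*} [NormedAddCommGroup X] [NormedSpace ℝ X]
    {S : Set X} {x u : X} (hu : u ∈ closure (clarkeTangentCone S x)) :
    u ∈ clarkeTangentCone S x := by
  intro ε hε
  obtain ⟨w, hw, hwu⟩ := Metric.mem_closure_iff.1 hu (ε / 2) (by positivity)
  obtain ⟨δ, hδ, μ, hμ, H⟩ := hw (ε / 2) (by positivity)
  refine ⟨δ, hδ, μ, hμ, fun y hy hyx t ht => ?_⟩
  obtain ⟨b, hb, hbS⟩ := H y hy hyx t ht
  have hε' : (ε : ℝ) ≠ 0 := ne_of_gt hε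
  refine ⟨ε⁻¹ • (w - u) + (2:ℝ)⁻¹ • b, ?_, ?_⟩
  · have h1 : ‖ε⁻¹ • (w - u)‖ ≤ 1 / 2 := by
      rw [norm_smul, Real.norm_eq_abs, abs_of_pos (inv_pos.2 hε)]
      have : ‖w - u‖ ≤ ε / 2 := by
        rw [← norm_sub_rev u w] at *
        exact le_of_lt (by simpa [dist_eq_norm] using hwu)
      rw [inv_mul_le_iff₀ hε]; linarith
    calc ‖ε⁻¹ • (w - u) + (2:ℝ)⁻¹ • b‖ ≤ ‖ε⁻¹ • (w - u)‖ + ‖(2:ℝ)⁻¹ • b‖ := norm_add_le _ _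
      _ ≤ 1/2 + 1/2 := by
          refine add_le_add h1 ?_
          rw [norm_smul]; norm_num; linarith
      _ = 1 := by norm_num
  · have key : u + ε • (ε⁻¹ • (w - u) + (2:ℝ)⁻¹ • b) = w + (ε / 2) • b := by
      match_scalars <;> field_simp <;> ring
    rw [key]; exact hbS

lemma clarke_zero {X : Type*} [NormedAddCommGroup X] [NormedSpace ℝ X]
    {S : Set X} {x : X} : (0 : X) ∈ clarkeTangentCone S x :=
  fun ε hε => ⟨1, one_pos, 1, one_pos, fun y hy _ t _ => ⟨0, by simp, by simpa using hy⟩⟩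

/-- Given a dense subset `{vₙ}` of `T̂_S(x) ∩ Σ` and positive reals `λₙ → 0`, the set
`{λₙ vₙ}` is a uniform tangent set to `S` at `x` generating the Clarke tangent cone. -/
theorem scaled_dense_sequence_is_uts_generating_clarke
    {X : Type*} [NormedAddCommGroup X] [NormedSpace ℝ X] [CompleteSpace X]
    (S : Set X) (x : X) (hx : x ∈ S)
    (v : ℕ → X) (hv : ∀ n, v n ∈ clarkeTangentCone S x ∩ sphere (0:X) 1)
    (hdense : clarkeTangentCone S x ∩ sphere (0:X) 1 ⊆ closure (Set.range v))
    (lam : ℕ → ℝ) (hlam : ∀ n, 0 < lam n) (hlam0 : Tendsto lam atTop (nhds 0)) :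
    (Bornology.IsBounded (Set.range fun n => lam n • v n)) ∧
    (∀ ε > (0:ℝ), ∃ δ > (0:ℝ), ∀ w ∈ Set.range (fun n => lam n • v n),
      ∀ y ∈ S, ‖y - x‖ ≤ δ → ∃ mu > (0:ℝ), ∀ t ∈ Set.Icc (0:ℝ) mu,
        ∃ b : X, ‖b‖ ≤ 1 ∧ y + t • (w + ε • b) ∈ S) ∧
    closure {y : X | ∃ α > (0:ℝ), ∃ d ∈ Set.range (fun n => lam n • v n), y = α • d}
      = clarkeTangentCone S x := by
  have hvn : ∀ n, ‖v n‖ = 1 := fun n => by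
    have := (hv n).2; rwa [mem_sphere_zero_iff_norm] at this
  have hwnorm : ∀ n, ‖lam n • v n‖ = lam n := fun n => by
    rw [norm_smul, hvn, Real.norm_eq_abs, abs_of_pos (hlam n), mul_one]
  have htend : Tendsto (fun n => lam n • v n) atTop (nhds 0) := by
    rw [tendsto_zero_iff_norm_tendsto_zero]
    simpa [hwnorm] using hlam0
  have hwcone : ∀ n, lam n • v n ∈ clarkeTangentCone S x :=
    fun n => clarke_smul (hv n).1 (hlam n)
  refine ⟨htend.cauchySeq.isBounded_range, ?_, ?_⟩
  · -- uniform tangency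
    intro ε hε
    obtain ⟨N, hN⟩ := Filter.eventually_atTop.1 (hlam0.eventually (eventually_lt_nhds hε))
    choose δf hδf μf hμf Hf using fun n => hwcone n ε hε
    refine ⟨(Finset.range (N + 1)).inf' ⟨0, by simp⟩ δf, ?_, ?_⟩
    · exact (Finset.lt_inf'_iff _).2 fun n _ => hδf n
    rintro w ⟨n, rfl⟩ y hy hyx
    simp only at hyx ⊢
    by_cases hn : n ≤ N
    · exact ⟨μf n, hμf n, fun t ht => Hf n y hy
        (le_trans hyx (Finset.inf'_le _ (Finset.mem_range.2 (by omega)))) t ht⟩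
    · have hlt : lam n < ε := hN n (by omega)
      refine ⟨1, one_pos, fun t ht => ⟨-((ε⁻¹ * lam n) • v n), ?_, ?_⟩⟩
      · rw [norm_neg, norm_smul, hvn, mul_one, Real.norm_eq_abs,
          abs_of_pos (mul_pos (inv_pos.2 hε) (hlam n))]
        rw [inv_mul_le_iff₀ hε]
        nlinarith
      · have hz : lam n • v n + ε • (-((ε⁻¹ * lam n) • v n)) = 0 := by
          rw [smul_neg, smul_smul, ← mul_assoc, mul_inv_cancel₀ (ne_of_gt hε), one_mul,
            add_neg_cancel]
        rw [hz, smul_zero, add_zero]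
        exact hy
  · -- generated cone equals Clarke cone
    apply Set.Subset.antisymm
    · have hK : {y : X | ∃ α > (0:ℝ), ∃ d ∈ Set.range (fun n => lam n • v n), y = α • d}
          ⊆ clarkeTangentCone S x := by
        rintro y ⟨α, hα, d, ⟨n, rfl⟩, rfl⟩
        exact clarke_smul (hwcone n) hα
      exact fun u hu => clarke_closed (closure_mono hK hu)
    · intro u hu
      rw [Metric.mem_closure_iff]
      intro r hr
      by_cases hu0 : u = 0
      · subst hu0
        obtain ⟨n, hn⟩ := (Filter.eventually_atTop.1
          (hlam0.eventually (eventually_lt_nhds hr))).imp (fun N h => h N le_rfl)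
        refine ⟨lam n • v n, ⟨1, one_pos, lam n • v n, ⟨n, rfl⟩, (one_smul _ _).symm⟩, ?_⟩
        rw [dist_eq_norm, zero_sub, norm_neg, hwnorm]
        exact hn
      · have hun : (0:ℝ) < ‖u‖ := norm_pos_iff.2 hu0
        have hunit : ‖u‖⁻¹ • u ∈ clarkeTangentCone S x ∩ sphere (0:X) 1 := by
          refine ⟨clarke_smul hu (inv_pos.2 hun), ?_⟩
          rw [mem_sphere_zero_iff_norm, norm_smul, Real.norm_eq_abs,
            abs_of_pos (inv_pos.2 hun), inv_mul_cancel₀ (ne_of_gt hun)]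
        obtain ⟨z, ⟨n, rfl⟩, hz⟩ := Metric.mem_closure_iff.1 (hdense hunit) (r / ‖u‖)
          (div_pos hr hun)
        refine ⟨‖u‖ • v n, ⟨‖u‖ * (lam n)⁻¹, mul_pos hun (inv_pos.2 (hlam n)),
          lam n • v n, ⟨n, rfl⟩, ?_⟩, ?_⟩
        · rw [smul_smul, mul_assoc, inv_mul_cancel₀ (ne_of_gt (hlam n)), mul_one]
        · have : u - ‖u‖ • v n = ‖u‖ • (‖u‖⁻¹ • u - v n) := by
            rw [smul_sub, smul_smul, mul_inv_cancel₀ (ne_of_gt hun), one_smul]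
          rw [dist_eq_norm, this, norm_smul, Real.norm_eq_abs, abs_of_pos hun]
          have := hz
          rw [dist_eq_norm] at this
          calc ‖u‖ * ‖‖u‖⁻¹ • u - v n‖ < ‖u‖ * (r / ‖u‖) :=
                (mul_lt_mul_iff_right₀ hun).2 this
            _ = r := by field_simp
end

section
/- Let X be a Banach space, φ : X → ℝ ∪ {+∞} lower semicontinuous with φ(x₀) < +∞, and ψ : X → ℝ continuous on X and strictly Fréchet differentiable at x₀ with ψ(x₀) = 0 and ψ'(x₀) = 0. Then a set D ⊆ X × ℝ is a uniform tangent set to epi φ at (x₀, φ(x₀)) if and only if D is a uniform tangent set to epi(φ + ψ) at (x₀, φ(x₀)). -/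
open Metric
set_option maxHeartbeats 1000000

/-- `D` is a uniform tangent set to `E` at `e₀` (with the ambient norm). -/
def IsUniformTangentSet {Y : Type*} [NormedAddCommGroup Y] [NormedSpace ℝ Y]
    (E : Set Y) (e₀ : Y) (D : Set Y) : Prop :=
  Bornology.IsBounded D ∧
    ∀ ε > (0:ℝ), ∃ δ > (0:ℝ), ∀ d ∈ D, ∀ e ∈ E, ‖e - e₀‖ ≤ δ →
      ∃ lam > (0:ℝ), ∀ t ∈ Set.Icc (0:ℝ) lam,
        ∃ b : Y, ‖b‖ ≤ 1 ∧ e + t • (d + ε • b) ∈ E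

lemma ereal_add_coe_le_coe_iff (a : EReal) (c b : ℝ) :
    a + (c : EReal) ≤ (b : EReal) ↔ a ≤ ((b - c : ℝ) : EReal) := by
  induction a using EReal.rec with
  | bot => simp
  | coe x =>
      rw [← EReal.coe_add, EReal.coe_le_coe_iff, EReal.coe_le_coe_iff]
      constructor <;> intro <;> linarith
  | top => simp [EReal.top_add_coe, ← EReal.coe_sub]

lemma uts_forward {X : Type*} [NormedAddCommGroup X] [NormedSpace ℝ X]
    (φ : X → EReal) (x₀ : X) (r : ℝ)
    (ψ : X → ℝ) (hψ0 : ψ x₀ = 0)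
    (hψstrict : ∀ ε > (0:ℝ), ∃ δ > (0:ℝ), ∀ x y : X, ‖x - x₀‖ < δ → ‖y - x₀‖ < δ →
      |ψ y - ψ x| ≤ ε * ‖y - x‖)
    (D : Set (X × ℝ))
    (h : IsUniformTangentSet {p : X × ℝ | φ p.1 ≤ (p.2 : EReal)} (x₀, r) D) :
    IsUniformTangentSet {p : X × ℝ | φ p.1 + (ψ p.1 : EReal) ≤ (p.2 : EReal)} (x₀, r) D := by
  obtain ⟨hbdd, h⟩ := h
  obtain ⟨M₀, hM₀⟩ := hbdd.exists_norm_le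
  set M : ℝ := max M₀ 0 with hMdef
  have hMnonneg : 0 ≤ M := le_max_right _ _
  refine ⟨hbdd, fun ε hε => ?_⟩
  have hMε : 0 < M + ε := by linarith
  set η : ℝ := ε / (2 * (M + ε)) with hηdef
  have hηpos : 0 < η := by positivity
  have hηME : η * (M + ε) = ε / 2 := by rw [hηdef]; field_simp
  obtain ⟨δη, hδη, hη⟩ := hψstrict η hηpos
  obtain ⟨δ, hδ, hUTS⟩ := h (ε/2) (by positivity)
  set δ' : ℝ := min (min (δ/2) (δη/3)) (δ/(2*η)) with hδ'def
  have hδ'pos : 0 < δ' := lt_min (lt_min (by positivity) (by positivity)) (by positivity)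
  have hδ'1 : δ' ≤ δ/2 := (min_le_left _ _).trans (min_le_left _ _)
  have hδ'2 : δ' ≤ δη/3 := (min_le_left _ _).trans (min_le_right _ _)
  have hδ'3 : η * δ' ≤ δ/2 := by
    have h3 : δ' ≤ δ/(2*η) := min_le_right _ _
    calc η * δ' ≤ η * (δ/(2*η)) := by nlinarith
    _ = δ/2 := by field_simp
  refine ⟨δ', hδ'pos, fun d hd e' he' hdist => ?_⟩
  obtain ⟨x, p'⟩ := e'
  simp only [Set.mem_setOf_eq] at he'
  have hx : ‖x - x₀‖ ≤ δ' := by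
    have h1 := norm_fst_le ((x, p') - (x₀, r))
    simpa using h1.trans hdist
  have hp : |p' - r| ≤ δ' := by
    have h1 := norm_snd_le ((x, p') - (x₀, r))
    simpa [Real.norm_eq_abs] using h1.trans hdist
  have hxδη : ‖x - x₀‖ < δη := lt_of_le_of_lt (hx.trans hδ'2) (by linarith)
  have hψx : |ψ x| ≤ δ/2 := by
    have h1 := hη x₀ x (by simpa using hδη) hxδη
    rw [hψ0, sub_zero] at h1
    have : η * ‖x - x₀‖ ≤ η * δ' := by nlinarith
    linarith
  have he : φ x ≤ ((p' - ψ x : ℝ) : EReal) := (ereal_add_coe_le_coe_iff _ _ _).1 he'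
  have hedist : ‖((x, p' - ψ x) : X × ℝ) - (x₀, r)‖ ≤ δ := by
    rw [Prod.norm_def]
    refine max_le (by simpa using hx.trans (by linarith)) ?_
    simp only [Prod.snd_sub, Real.norm_eq_abs]
    have : |p' - ψ x - r| ≤ |p' - r| + |ψ x| := by
      calc |p' - ψ x - r| = |(p' - r) + (-ψ x)| := by ring_nf
      _ ≤ |p' - r| + |(-ψ x)| := abs_add_le _ _
      _ = |p' - r| + |ψ x| := by rw [abs_neg]
    linarith
  obtain ⟨lam, hlam, hl⟩ := hUTS d hd (x, p' - ψ x) he hedist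
  refine ⟨min lam (δη/(3*(M+ε))), lt_min hlam (by positivity), fun t ht => ?_⟩
  obtain ⟨ht0, htlam⟩ := ht
  rcases eq_or_lt_of_le ht0 with h0 | htpos
  · refine ⟨0, by simp, ?_⟩
    rw [← h0, zero_smul, add_zero]
    exact he'
  obtain ⟨b, hb, hmem⟩ := hl t ⟨ht0, htlam.trans (min_le_left _ _)⟩
  have ht' : t ≤ δη/(3*(M+ε)) := htlam.trans (min_le_right _ _)
  set x' : X := x + t • (d.1 + (ε/2) • b.1) with hx'def
  set q : ℝ := p' - ψ x + t * (d.2 + ε/2 * b.2) with hqdef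
  have hmem' : φ x' ≤ ((q : ℝ) : EReal) := by
    simpa [hx'def, hqdef, Set.mem_setOf_eq, Prod.fst_add, Prod.snd_add, Prod.smul_fst,
      Prod.smul_snd, smul_eq_mul, mul_add] using hmem
  have hdM : ‖d.1‖ ≤ M := (norm_fst_le d).trans ((hM₀ d hd).trans (le_max_left _ _))
  have hbM : ‖b.1‖ ≤ 1 := (norm_fst_le b).trans hb
  have hb2 : |b.2| ≤ 1 := by
    have := (norm_snd_le b).trans hb; simpa [Real.norm_eq_abs] using this
  have hdirn : ‖d.1 + (ε/2) • b.1‖ ≤ M + ε := by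
    calc ‖d.1 + (ε/2) • b.1‖ ≤ ‖d.1‖ + ‖(ε/2) • b.1‖ := norm_add_le _ _
    _ ≤ M + (ε/2) * 1 := by
        refine add_le_add hdM ?_
        rw [norm_smul, Real.norm_eq_abs, abs_of_pos (by positivity)]
        exact mul_le_mul_of_nonneg_left hbM (by positivity)
    _ ≤ M + ε := by linarith
  have hxx' : ‖x' - x‖ ≤ t * (M + ε) := by
    rw [hx'def, add_sub_cancel_left, norm_smul, Real.norm_eq_abs, abs_of_pos htpos]
    exact mul_le_mul_of_nonneg_left hdirn ht0
  have hx'δη : ‖x' - x₀‖ < δη := by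
    calc ‖x' - x₀‖ ≤ ‖x' - x‖ + ‖x - x₀‖ := norm_sub_le_norm_sub_add_norm_sub _ _ _
    _ ≤ t * (M + ε) + δη/3 := add_le_add (by linarith) (hx.trans hδ'2)
    _ < δη := by
        have : t * (M + ε) ≤ δη/3 := by
          calc t * (M + ε) ≤ (δη/(3*(M+ε))) * (M + ε) := by nlinarith
          _ = δη/3 := by field_simp
        linarith
  have hψdiff : |ψ x' - ψ x| ≤ ε/2 * t := by
    have h1 := hη x x' hxδη hx'δη
    have h2 : η * ‖x' - x‖ ≤ η * (t * (M + ε)) := mul_le_mul_of_nonneg_left hxx' hηpos.le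
    calc |ψ x' - ψ x| ≤ η * (t * (M + ε)) := h1.trans h2
    _ = ε/2 * t := by rw [← mul_assoc, mul_comm η t, mul_assoc, hηME]; ring
  refine ⟨((2:ℝ)⁻¹ • b.1, (ε/2 * b.2 + (ψ x' - ψ x)/t) / ε), ?_, ?_⟩
  · rw [Prod.norm_def]
    refine max_le ?_ ?_
    · simp only [norm_smul, Real.norm_eq_abs]
      rw [abs_of_pos (by norm_num : (0:ℝ) < 2⁻¹)]
      nlinarith
    · simp only [Real.norm_eq_abs, abs_div]
      rw [abs_of_pos hε, div_le_one hε]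
      calc |ε/2 * b.2 + (ψ x' - ψ x)/t| ≤ |ε/2 * b.2| + |(ψ x' - ψ x)/t| := abs_add_le _ _
      _ ≤ ε/2 * 1 + (ε/2 * t)/t := by
          refine add_le_add ?_ ?_
          · rw [abs_mul, abs_of_pos (by positivity : (0:ℝ) < ε/2)]
            exact mul_le_mul_of_nonneg_left hb2 (by positivity)
          · rw [abs_div, abs_of_pos htpos]
            exact (div_le_div_iff_of_pos_right htpos).2 hψdiff
      _ = ε := by field_simp; ring
  · simp only [Set.mem_setOf_eq, Prod.fst_add, Prod.snd_add, Prod.smul_fst, Prod.smul_snd,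
      smul_eq_mul]
    have hfst : x + t • (d.1 + ε • ((2:ℝ)⁻¹ • b.1)) = x' := by
      have h2 : ε * (2:ℝ)⁻¹ = ε/2 := by ring
      rw [hx'def, smul_smul, h2]
    have hsnd : p' + t * (d.2 + ε * ((ε/2 * b.2 + (ψ x' - ψ x)/t) / ε)) = q + ψ x' := by
      rw [hqdef]
      field_simp
      ring
    rw [hfst, hsnd, ereal_add_coe_le_coe_iff]
    have : (q + ψ x') - ψ x' = q := by ring
    rw [this]
    exact hmem'

/-- Adding a strictly differentiable function with zero value and zero derivative at `x₀`
does not change uniform tangent sets to the epigraph at `(x₀, φ(x₀))`. -/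
theorem uts_epigraph_perturbation_iff
    {X : Type*} [NormedAddCommGroup X] [NormedSpace ℝ X] [CompleteSpace X]
    (φ : X → EReal) (hφbot : ∀ x, φ x ≠ ⊥) (hlsc : LowerSemicontinuous φ)
    (x₀ : X) (r : ℝ) (hr : φ x₀ = (r : EReal))
    (ψ : X → ℝ) (hψc : Continuous ψ) (hψ0 : ψ x₀ = 0)
    (hψstrict : ∀ ε > (0:ℝ), ∃ δ > (0:ℝ), ∀ x y : X, ‖x - x₀‖ < δ → ‖y - x₀‖ < δ →
      |ψ y - ψ x| ≤ ε * ‖y - x‖)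
    (D : Set (X × ℝ)) :
    IsUniformTangentSet {p : X × ℝ | φ p.1 ≤ (p.2 : EReal)} (x₀, r) D ↔
      IsUniformTangentSet {p : X × ℝ | φ p.1 + (ψ p.1 : EReal) ≤ (p.2 : EReal)} (x₀, r) D := by
  have hstrict' : ∀ ε > (0:ℝ), ∃ δ > (0:ℝ), ∀ x y : X, ‖x - x₀‖ < δ → ‖y - x₀‖ < δ →
      |(-ψ y) - (-ψ x)| ≤ ε * ‖y - x‖ := by
    intro ε hε
    obtain ⟨δ, hδ, hb⟩ := hψstrict ε hε
    exact ⟨δ, hδ, fun x y hx hy => by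
      have h1 := hb x y hx hy
      calc |(-ψ y) - (-ψ x)| = |ψ y - ψ x| := by rw [← abs_neg]; ring_nf
      _ ≤ ε * ‖y - x‖ := h1⟩
  constructor
  · exact fun h => uts_forward φ x₀ r ψ hψ0 hψstrict D h
  · intro h
    have h2 := uts_forward (fun x => φ x + (ψ x : EReal)) x₀ r (fun x => -ψ x)
      (by simp [hψ0]) hstrict' D h
    have hset : {p : X × ℝ | φ p.1 + (ψ p.1 : EReal) + ((-ψ p.1 : ℝ) : EReal) ≤ (p.2 : EReal)}
        = {p : X × ℝ | φ p.1 ≤ (p.2 : EReal)} := by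
      ext p
      simp only [Set.mem_setOf_eq]
      rw [ereal_add_coe_le_coe_iff, ereal_add_coe_le_coe_iff]
      have : (p.2 - -ψ p.1) - ψ p.1 = p.2 := by ring
      rw [this]
    rw [hset] at h2
    exact h2
end

section
/- The forward direction of the epigraph perturbation lemma: let φ : X → ℝ ∪ {+∞} be lower semicontinuous with φ(x₀) finite, ψ : X → ℝ continuous and strictly Fréchet differentiable at x₀ with ψ(x₀) = 0 and ψ'(x₀) = 0. If D ⊆ X × ℝ is a uniform tangent set to epi φ at (x₀, φ(x₀)), then D is a uniform tangent set to epi(φ + ψ) at (x₀, φ(x₀)). -/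
set_option maxHeartbeats 800000

open Metric

lemma ereal_helper (a : EReal) (s p : ℝ) :
    a + (s:EReal) ≤ (p:EReal) ↔ a ≤ ((p - s : ℝ) : EReal) := by
  induction a using EReal.rec with
  | bot => simp
  | coe q =>
      rw [← EReal.coe_add, EReal.coe_le_coe_iff, EReal.coe_le_coe_iff]
      constructor <;> intro h <;> linarith
  | top =>
      rw [EReal.top_add_coe]
      simp only [top_le_iff, EReal.coe_ne_top]

/-- Forward direction of the epigraph perturbation lemma. -/
theorem uts_epigraph_perturbation_forward
    {X : Type*} [NormedAddCommGroup X] [NormedSpace ℝ X] [CompleteSpace X]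
    (φ : X → EReal) (hφbot : ∀ x, φ x ≠ ⊥) (hlsc : LowerSemicontinuous φ)
    (x₀ : X) (r : ℝ) (hr : φ x₀ = (r : EReal))
    (ψ : X → ℝ) (hψc : Continuous ψ) (hψ0 : ψ x₀ = 0)
    (hψstrict : ∀ ε > (0:ℝ), ∃ δ > (0:ℝ), ∀ x y : X, ‖x - x₀‖ < δ → ‖y - x₀‖ < δ →
      |ψ y - ψ x| ≤ ε * ‖y - x‖)
    (D : Set (X × ℝ))
    (hD : IsUniformTangentSet {p : X × ℝ | φ p.1 ≤ (p.2 : EReal)} (x₀, r) D) :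
    IsUniformTangentSet {p : X × ℝ | φ p.1 + (ψ p.1 : EReal) ≤ (p.2 : EReal)} (x₀, r) D := by
  obtain ⟨hbdd, hD2⟩ := hD
  refine ⟨hbdd, ?_⟩
  intro ε hε
  obtain ⟨R, hR⟩ := hbdd.subset_closedBall 0
  set M : ℝ := max R 1 with hM
  have hM1 : (1:ℝ) ≤ M := le_max_right _ _
  have hM0 : (0:ℝ) < M := lt_of_lt_of_le one_pos hM1
  have hMd : ∀ d ∈ D, ‖d‖ ≤ M := fun d hd => le_trans
    (by simpa using mem_closedBall_zero_iff.mp (hR hd)) (le_max_left _ _)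
  set ε' : ℝ := ε / 2 with hε'
  have hε'pos : 0 < ε' := by positivity
  set ε'' : ℝ := ε / (2 * (M + ε)) with hε''
  have hε''pos : 0 < ε'' := by positivity
  obtain ⟨δ₂, hδ₂pos, hδ₂⟩ := hψstrict ε'' hε''pos
  obtain ⟨δ₁, hδ₁pos, hδ₁⟩ := hD2 ε' hε'pos
  set δ : ℝ := min (δ₁ / (1 + ε'')) (δ₂ / 2) with hδ
  have hδpos : 0 < δ := lt_min (by positivity) (by positivity)
  have hδle1 : δ ≤ δ₁ / (1 + ε'') := min_le_left _ _
  have hδle2 : δ ≤ δ₂ / 2 := min_le_right _ _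
  refine ⟨δ, hδpos, ?_⟩
  intro d hd e he heδ
  simp only [Set.mem_setOf_eq] at he
  -- basic bounds on e
  have hx1 : ‖e.1 - x₀‖ ≤ δ := by
    have := norm_fst_le (e - (x₀, r))
    simpa using this.trans heδ
  have hx2 : |e.2 - r| ≤ δ := by
    have := norm_snd_le (e - (x₀, r))
    simpa [Real.norm_eq_abs] using this.trans heδ
  have hx1δ₂ : ‖e.1 - x₀‖ < δ₂ := lt_of_le_of_lt (hx1.trans hδle2) (by linarith)
  have hψx : |ψ e.1| ≤ ε'' * ‖e.1 - x₀‖ := by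
    have := hδ₂ x₀ e.1 (by simpa using hδ₂pos) hx1δ₂
    simpa [hψ0] using this
  -- the shifted point lies in epi φ
  have he' : φ e.1 ≤ ((e.2 - ψ e.1 : ℝ) : EReal) := (ereal_helper _ _ _).mp he
  have he'mem : (e.1, e.2 - ψ e.1) ∈ {p : X × ℝ | φ p.1 ≤ (p.2 : EReal)} := he'
  have he'δ : ‖(e.1, e.2 - ψ e.1) - (x₀, r)‖ ≤ δ₁ := by
    rw [Prod.norm_def]
    have h1 : ‖e.1 - x₀‖ ≤ δ₁ := by
      refine hx1.trans (hδle1.trans ?_)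
      rw [div_le_iff₀ (by positivity)]; nlinarith
    have h2 : ‖e.2 - ψ e.1 - r‖ ≤ δ₁ := by
      rw [Real.norm_eq_abs]
      have : |e.2 - ψ e.1 - r| ≤ |e.2 - r| + |ψ e.1| := by
        rw [show e.2 - ψ e.1 - r = (e.2 - r) + -(ψ e.1) by ring]
        exact (abs_add_le _ _).trans (by simp)
      have hb : |ψ e.1| ≤ ε'' * δ :=
        hψx.trans (by nlinarith [hε''pos.le])
      have : |e.2 - ψ e.1 - r| ≤ δ * (1 + ε'') := by nlinarith
      refine this.trans ?_
      rw [hδ] at hδle1 ⊢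
      calc δ * (1 + ε'') ≤ (δ₁ / (1 + ε'')) * (1 + ε'') := by nlinarith [hδle1]
        _ = δ₁ := by field_simp
    exact max_le (by simpa using h1) (by simpa using h2)
  obtain ⟨lam, hlampos, hlam⟩ := hδ₁ d hd _ he'mem he'δ
  set lam' : ℝ := min lam (δ₂ / (2 * (M + ε' + 1))) with hlam'
  have hlam'pos : 0 < lam' := lt_min hlampos (by positivity)
  refine ⟨lam', hlam'pos, ?_⟩
  rintro t ⟨ht0, htl⟩
  rcases eq_or_lt_of_le ht0 with rfl | htpos
  · exact ⟨0, by simp, by simpa using he⟩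
  obtain ⟨b, hb1, hbE⟩ := hlam t ⟨ht0, htl.trans (min_le_left _ _)⟩
  simp only [Set.mem_setOf_eq] at hbE
  have hb11 : ‖b.1‖ ≤ 1 := (norm_fst_le b).trans hb1
  have hb21 : |b.2| ≤ 1 := by
    have := (norm_snd_le b).trans hb1; simpa [Real.norm_eq_abs] using this
  have hd1 : ‖d.1‖ ≤ M := (norm_fst_le d).trans (hMd d hd)
  have hd2 : |d.2| ≤ M := by
    have := (norm_snd_le d).trans (hMd d hd); simpa [Real.norm_eq_abs] using this
  set x' : X := e.1 + t • (d.1 + ε' • b.1) with hx'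
  -- bound on step size
  have hstep : ‖x' - e.1‖ ≤ t * (M + ε') := by
    rw [hx', add_sub_cancel_left, norm_smul, Real.norm_eq_abs, abs_of_pos htpos]
    have : ‖d.1 + ε' • b.1‖ ≤ M + ε' := by
      refine (norm_add_le _ _).trans ?_
      have : ‖ε' • b.1‖ ≤ ε' := by
        rw [norm_smul, Real.norm_eq_abs, abs_of_pos hε'pos]; nlinarith
      linarith
    exact mul_le_mul_of_nonneg_left this htpos.le
  have htsmall : t * (M + ε') < δ₂ / 2 := by
    have h1 : t ≤ δ₂ / (2 * (M + ε' + 1)) := htl.trans (min_le_right _ _)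
    have h2 : t * (M + ε') ≤ (δ₂ / (2 * (M + ε' + 1))) * (M + ε') :=
      mul_le_mul_of_nonneg_right h1 (by positivity)
    refine lt_of_le_of_lt h2 ?_
    rw [div_mul_eq_mul_div, div_lt_div_iff₀ (by positivity) (by positivity)]
    nlinarith
  have hx'δ₂ : ‖x' - x₀‖ < δ₂ := by
    have : ‖x' - x₀‖ ≤ ‖x' - e.1‖ + ‖e.1 - x₀‖ := norm_sub_le_norm_sub_add_norm_sub _ _ _
    have h2 : ‖e.1 - x₀‖ ≤ δ₂ / 2 := hx1.trans hδle2
    linarith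
  have hψdiff : |ψ x' - ψ e.1| ≤ ε'' * (t * (M + ε')) :=
    (hδ₂ e.1 x' hx1δ₂ hx'δ₂).trans (by nlinarith [hε''pos.le])
  -- construct the witness b'
  set c : ℝ := (ε' / ε) * b.2 + (ψ x' - ψ e.1) / (t * ε) with hc
  refine ⟨((ε' / ε) • b.1, c), ?_, ?_⟩
  · rw [Prod.norm_def]
    have h1 : ‖(ε' / ε) • b.1‖ ≤ 1 := by
      rw [norm_smul, Real.norm_eq_abs, abs_of_pos (by positivity)]
      have : ε' / ε = 1 / 2 := by rw [hε']; field_simp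
      rw [this]; linarith
    have h2 : |c| ≤ 1 := by
      have hhalf : ε' / ε = 1 / 2 := by rw [hε']; field_simp
      have hA : |(ε' / ε) * b.2| ≤ 1 / 2 := by
        rw [abs_mul, hhalf, abs_of_pos (by norm_num : (0:ℝ) < 1/2)]
        nlinarith [abs_nonneg b.2]
      have hB : |(ψ x' - ψ e.1) / (t * ε)| ≤ 1 / 2 := by
        rw [abs_div, abs_of_pos (by positivity : (0:ℝ) < t * ε)]
        rw [div_le_iff₀ (by positivity)]
        have : ε'' * (t * (M + ε')) ≤ 1 / 2 * (t * ε) := by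
          rw [hε'', hε']
          rw [div_mul_eq_mul_div, div_le_iff₀ (by positivity)]
          nlinarith [mul_nonneg (mul_nonneg htpos.le hε.le) hε.le]
        exact hψdiff.trans this
      calc |c| ≤ |(ε' / ε) * b.2| + |(ψ x' - ψ e.1) / (t * ε)| := abs_add_le _ _
        _ ≤ 1 := by linarith
    exact max_le h1 (by simpa [Real.norm_eq_abs] using h2)
  · simp only [Set.mem_setOf_eq]
    have hfst : (e + t • (d + ε • ((ε' / ε) • b.1, c))).1 = x' := by
      simp only [Prod.fst_add, Prod.smul_fst, Prod.fst_add, hx']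
      congr 1
      rw [smul_smul, mul_div_cancel₀ _ (ne_of_gt hε)]
    have hsnd : (e + t • (d + ε • ((ε' / ε) • b.1, c))).2
        = (e.2 - ψ e.1 + t * (d.2 + ε' * b.2)) + ψ x' := by
      simp only [Prod.snd_add, Prod.smul_snd, smul_eq_mul, hc]
      field_simp
      ring
    have hpt1 : ((e.1, e.2 - ψ e.1) + t • (d + ε' • b)).1 = x' := by
      simp [hx']
    have hpt2 : ((e.1, e.2 - ψ e.1) + t • (d + ε' • b)).2
        = e.2 - ψ e.1 + t * (d.2 + ε' * b.2) := by
      simp [smul_eq_mul]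
      ring
    rw [hpt1, hpt2] at hbE
    rw [hfst, hsnd, ereal_helper]
    rw [show e.2 - ψ e.1 + t * (d.2 + ε' * b.2) + ψ x' - ψ x'
        = e.2 - ψ e.1 + t * (d.2 + ε' * b.2) from by ring]
    exact hbE
end

section
/- If D is a uniform tangent set to a closed set S at x₀ ∈ S (in the strong, λ-uniform sense: for each ε > 0 there exist δ > 0 and λ > 0 such that S ∩ (x + t(v + ε·closedBall)) ≠ ∅ for all v ∈ D, x ∈ S ∩ (x₀ + δ·closedBall), t ∈ [0, λ]), then the convex hull of D is a uniform tangent set to S at x₀ in the same strong sense. -/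
open Metric

/-- The convex hull of a uniform tangent set (in the strong λ-uniform sense) is again a
uniform tangent set in the same strong sense. -/
theorem convexHull_strong_uts
    {X : Type*} [NormedAddCommGroup X] [NormedSpace ℝ X] [CompleteSpace X]
    (S : Set X) (hS : IsClosed S) (x₀ : X) (hx₀ : x₀ ∈ S)
    (D : Set X) (hD : Bornology.IsBounded D)
    (h : ∀ ε > (0:ℝ), ∃ δ > (0:ℝ), ∃ lam > (0:ℝ), ∀ v ∈ D, ∀ x ∈ S, ‖x - x₀‖ ≤ δ →
      ∀ t ∈ Set.Icc (0:ℝ) lam, ∃ b : X, ‖b‖ ≤ 1 ∧ x + t • (v + ε • b) ∈ S) :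
    ∀ ε > (0:ℝ), ∃ δ > (0:ℝ), ∃ lam > (0:ℝ), ∀ v ∈ convexHull ℝ D, ∀ x ∈ S,
      ‖x - x₀‖ ≤ δ → ∀ t ∈ Set.Icc (0:ℝ) lam,
        ∃ b : X, ‖b‖ ≤ 1 ∧ x + t • (v + ε • b) ∈ S := by
  intro ε hε
  obtain ⟨δ, hδ, lam, hlam, hmain⟩ := h ε hε
  obtain ⟨M, hM⟩ := hD.exists_norm_le
  set M' := max M 0 with hM'def
  have hM'0 : 0 ≤ M' := le_max_right _ _
  set K := M' + ε with hKdef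
  have hK0 : 0 < K := by positivity
  set lam' := min lam (δ / (2*K)) with hlam'def
  have hlam'0 : 0 < lam' := lt_min hlam (by positivity)
  set T : Set X := {v | ‖v‖ ≤ M' ∧ ∀ x ∈ S, ∀ t : ℝ, 0 ≤ t → t ≤ lam' →
      ‖x - x₀‖ ≤ δ - t*K → ∃ b : X, ‖b‖ ≤ 1 ∧ x + t • (v + ε • b) ∈ S} with hTdef
  have hDT : D ⊆ T := by
    intro v hv
    refine ⟨le_trans (hM v hv) (le_max_left _ _), ?_⟩
    intro x hx t ht0 htl hxd
    exact hmain v hv x hx (hxd.trans (by nlinarith [mul_nonneg ht0 hK0.le]))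
      t ⟨ht0, htl.trans (min_le_left _ _)⟩
  have hTconv : Convex ℝ T := by
    rintro v₁ ⟨hv₁M, hv₁⟩ v₂ ⟨hv₂M, hv₂⟩ a b ha hb hab
    constructor
    · calc ‖a • v₁ + b • v₂‖ ≤ ‖a • v₁‖ + ‖b • v₂‖ := norm_add_le _ _
        _ ≤ a * M' + b * M' := by
            rw [norm_smul, norm_smul, Real.norm_of_nonneg ha, Real.norm_of_nonneg hb]
            gcongr
        _ = M' := by nlinarith
    · intro x hx t ht0 htl hxd
      have hat : 0 ≤ a * t := mul_nonneg ha ht0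
      have hbt : 0 ≤ b * t := mul_nonneg hb ht0
      have hatK : 0 ≤ a * t * K := mul_nonneg hat hK0.le
      have hbtK : 0 ≤ b * t * K := mul_nonneg hbt hK0.le
      have hsplit : a * t * K + b * t * K = t * K := by
        have : (a + b) * (t * K) = 1 * (t * K) := by rw [hab]
        nlinarith [this]
      obtain ⟨b₁, hb₁, hS₁⟩ := hv₁ x hx (a*t) hat (by nlinarith) (by linarith)
      have hnorm1 : ‖v₁ + ε • b₁‖ ≤ K := by
        calc ‖v₁ + ε • b₁‖ ≤ ‖v₁‖ + ‖ε • b₁‖ := norm_add_le _ _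
          _ ≤ M' + ε * 1 := by
              rw [norm_smul, Real.norm_of_nonneg hε.le]
              gcongr
          _ = K := by ring
      have hx'd : ‖x + (a*t) • (v₁ + ε • b₁) - x₀‖ ≤ δ - (b*t)*K := by
        have : x + (a*t) • (v₁ + ε • b₁) - x₀ = (x - x₀) + (a*t) • (v₁ + ε • b₁) := by
          abel
        rw [this]
        calc ‖(x - x₀) + (a*t) • (v₁ + ε • b₁)‖
            ≤ ‖x - x₀‖ + ‖(a*t) • (v₁ + ε • b₁)‖ := norm_add_le _ _
          _ ≤ (δ - t*K) + (a*t) * K := by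
              rw [norm_smul, Real.norm_of_nonneg hat]
              gcongr
          _ ≤ δ - (b*t)*K := by nlinarith
      obtain ⟨b₂, hb₂, hS₂⟩ := hv₂ (x + (a*t) • (v₁ + ε • b₁)) hS₁ (b*t) hbt
        (by nlinarith) hx'd
      refine ⟨a • b₁ + b • b₂, ?_, ?_⟩
      · calc ‖a • b₁ + b • b₂‖ ≤ ‖a • b₁‖ + ‖b • b₂‖ := norm_add_le _ _
          _ ≤ a * 1 + b * 1 := by
              rw [norm_smul, norm_smul, Real.norm_of_nonneg ha, Real.norm_of_nonneg hb]
              gcongr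
          _ = 1 := by linarith
      · have heq : x + t • ((a • v₁ + b • v₂) + ε • (a • b₁ + b • b₂))
            = x + (a*t) • (v₁ + ε • b₁) + (b*t) • (v₂ + ε • b₂) := by
          module
        rw [heq]
        exact hS₂
  have hsub : convexHull ℝ D ⊆ T := convexHull_min hDT hTconv
  refine ⟨δ/2, by positivity, lam', hlam'0, ?_⟩
  rintro v hv x hx hxd t ⟨ht0, htl⟩
  have h1 : t ≤ δ / (2*K) := htl.trans (min_le_right _ _)
  have h2 : t * K ≤ δ / 2 := by
    rw [le_div_iff₀ (by positivity : (0:ℝ) < 2*K)] at h1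
    nlinarith
  have h3 : ‖x - x₀‖ ≤ δ - t * K := by clear_value T lam' K M'; linarith
  exact (hsub hv).2 x hx t ht0 htl h3
end
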